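/- arXiv:2510.03849 — 3 statements merged into one kernel-verified Lean document; each statement's English description precedes it below -/
import Mathlib

section
/- Let φ : [0,∞) → [0,∞) be an N-function of class C¹([0,∞)) ∩ C²((0,∞)) with φ(0) = 0, φ'(0) = 0, φ' increasing and positive on (0,∞), satisfying p ≤ s·φ''(s)/φ'(s) + 1 ≤ q for all s > 0, where 1 < p ≤ q, and set V(Q) := sqrt(φ'(1+|Q|)/(1+|Q|))·Q for Q ∈ ℝ^{N×n}. Then there is a constant c = c(p,q,N,n) ≥ 1 such that for every measurable set U ⊂ ℝ^m with 0 < |U| < ∞ and every g ∈ L¹(U; ℝ^{N×n}) with ⨍_U |V(g)|² dz < ∞: ⨍_U |V(g) − (V(g))_U|² dz ≤ ⨍_U |V(g) − V((g)_U)|² dz ≤ c · ⨍_U |V(g) − (V(g))_U|² dz, where (h)_U := ⨍_U h dz denotes the mean value. -/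
open MeasureTheory Real Set Filter
open scoped InnerProductSpace

/-- An N-function `φ` of class `C¹([0,∞)) ∩ C²((0,∞))` with (right) derivative `φ'`
and second derivative `φ''` on `(0,∞)`, satisfying `φ(0) = 0`, `φ'(0) = 0`, `φ'`
increasing and positive on `(0,∞)`, and the index condition
`p ≤ s·φ''(s)/φ'(s) + 1 ≤ q` for all `s > 0`. -/
structure IsNFun (φ φ' φ'' : ℝ → ℝ) (p q : ℝ) : Prop where
  map_zero : φ 0 = 0
  nonneg : ∀ s : ℝ, 0 ≤ s → 0 ≤ φ s
  hasDeriv : ∀ s ∈ Set.Ici (0:ℝ), HasDerivWithinAt φ (φ' s) (Set.Ici 0) s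
  derivCont : ContinuousOn φ' (Set.Ici 0)
  hasDeriv2 : ∀ s ∈ Set.Ioi (0:ℝ), HasDerivWithinAt φ' (φ'' s) (Set.Ioi 0) s
  deriv2Cont : ContinuousOn φ'' (Set.Ioi 0)
  deriv_zero : φ' 0 = 0
  deriv_mono : MonotoneOn φ' (Set.Ici 0)
  deriv_pos : ∀ s : ℝ, 0 < s → 0 < φ' s
  idx_low : ∀ s : ℝ, 0 < s → p ≤ s * φ'' s / φ' s + 1
  idx_high : ∀ s : ℝ, 0 < s → s * φ'' s / φ' s + 1 ≤ q

/-- The shifted N-function `φ_σ(s) = ∫₀^s φ'(σ+t)·t/(σ+t) dt`, expressed through the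
derivative `φ'` of `φ`. -/
noncomputable def shifted (φ' : ℝ → ℝ) (σ s : ℝ) : ℝ :=
  ∫ t in (0:ℝ)..s, φ' (σ + t) * t / (σ + t)

/-- `V(Q) = sqrt(φ'(1+|Q|)/(1+|Q|))·Q`. -/
noncomputable def Vfun {E : Type*} [NormedAddCommGroup E] [NormedSpace ℝ E]
    (φ' : ℝ → ℝ) (Q : E) : E :=
  Real.sqrt (φ' (1 + ‖Q‖) / (1 + ‖Q‖)) • Q

namespace VME

/-- shifted density `h_σ(r) = φ'(σ+r)·r/(σ+r)` -/
noncomputable def hh (φ' : ℝ → ℝ) (σ r : ℝ) : ℝ := φ' (σ + r) * r / (σ + r)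

/-- `K_σ(r) = φ'(σ+r)·r²/(σ+r)` -/
noncomputable def KK (φ' : ℝ → ℝ) (σ r : ℝ) : ℝ := φ' (σ + r) * r ^ 2 / (σ + r)

/-- `Ω(b) = φ'(1+b)/(1+b)` -/
noncomputable def Om (φ' : ℝ → ℝ) (b : ℝ) : ℝ := φ' (1 + b) / (1 + b)

variable {p q : ℝ} {φ φ' φ'' : ℝ → ℝ}


variable {p q : ℝ} {φ φ' φ'' : ℝ → ℝ}

theorem hasDerivAt_phi' (h : IsNFun φ φ' φ'' p q) {s : ℝ} (hs : 0 < s) :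
    HasDerivAt φ' (φ'' s) s :=
  (h.hasDeriv2 s hs).hasDerivAt (Ioi_mem_nhds hs)

theorem idx_low' (h : IsNFun φ φ' φ'' p q) (hp : 1 ≤ p) {s : ℝ} (hs : 0 < s) :
    0 ≤ s * φ'' s := by
  have h1 := h.idx_low s hs
  have h2 := h.deriv_pos s hs
  have h3 : 0 ≤ s * φ'' s / φ' s := by linarith
  have : s * φ'' s = s * φ'' s / φ' s * φ' s := by field_simp
  rw [this]; exact mul_nonneg h3 h2.le

theorem idx_high' (h : IsNFun φ φ' φ'' p q) {s : ℝ} (hs : 0 < s) :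
    s * φ'' s ≤ (q - 1) * φ' s := by
  have h1 := h.idx_high s hs
  have h2 := h.deriv_pos s hs
  have h3 : s * φ'' s / φ' s ≤ q - 1 := by linarith
  calc s * φ'' s = s * φ'' s / φ' s * φ' s := by field_simp
  _ ≤ (q - 1) * φ' s := mul_le_mul_of_nonneg_right h3 h2.le

theorem phi'_ratio (h : IsNFun φ φ' φ'' p q) {x y : ℝ}
    (hx : 1 ≤ x) (hxy : x ≤ y) : φ' y ≤ (y / x) ^ (q - 1) * φ' x := by
  have hx0 : (0:ℝ) < x := lt_of_lt_of_le one_pos hx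
  have hy0 : (0:ℝ) < y := lt_of_lt_of_le hx0 hxy
  have key : AntitoneOn (fun s => φ' s * s ^ (1 - q)) (Ici 1) := by
    apply antitoneOn_of_hasDerivWithinAt_nonpos (convex_Ici 1)
      (f' := fun z => φ'' z * z ^ (1-q) + φ' z * ((1-q) * z ^ (1-q-1)))
    · apply ContinuousOn.mul (h.derivCont.mono (by intro z hz; simp at *; linarith))
      exact ContinuousOn.rpow_const continuousOn_id
        (fun z hz => Or.inl (by simp at hz; intro hz0; rw [hz0] at hz; linarith))
    · intro z hz
      rw [interior_Ici] at hz
      have hz0 : (0:ℝ) < z := lt_trans one_pos hz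
      exact ((hasDerivAt_phi' h hz0).mul
        (Real.hasDerivAt_rpow_const (Or.inl (ne_of_gt hz0)))).hasDerivWithinAt
    · intro z hz
      rw [interior_Ici] at hz
      have hz0 : (0:ℝ) < z := lt_trans one_pos hz
      have e : z ^ (1-q) = z * z ^ (1-q-1) := by
        rw [Real.rpow_sub hz0, Real.rpow_one]
        rw [show (1-q-1:ℝ) = -q by ring, Real.rpow_neg hz0.le, div_eq_mul_inv]
      rw [e]
      have hw : (0:ℝ) < z ^ (1-q-1) := Real.rpow_pos_of_pos hz0 _
      nlinarith [idx_high' h hz0]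
  have k := key hx (le_trans hx hxy) hxy
  have e1 : φ' y = φ' y * y ^ (1-q) * y ^ (q-1) := by
    rw [mul_assoc, ← Real.rpow_add hy0]; norm_num
  have e2 : (y/x) ^ (q-1) * φ' x = φ' x * x ^ (1-q) * y ^ (q-1) := by
    rw [Real.div_rpow hy0.le hx0.le, show (1-q) = -(q-1) by ring, Real.rpow_neg hx0.le]
    have : x ^ (q-1) ≠ 0 := ne_of_gt (Real.rpow_pos_of_pos hx0 _)
    field_simp
  rw [e1, e2]
  exact mul_le_mul_of_nonneg_right k (Real.rpow_pos_of_pos hy0 _).le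

/-- key ratio corollary -/
theorem phi'_ratio' (h : IsNFun φ φ' φ'' p q) (hq : 1 ≤ q) {x y K : ℝ}
    (hx : 1 ≤ x) (hxy : x ≤ y) (hK : y ≤ K * x) (hK1 : 1 ≤ K) :
    φ' y ≤ K ^ (q - 1) * φ' x := by
  have hx0 : (0:ℝ) < x := lt_of_lt_of_le one_pos hx
  have h1 := phi'_ratio h hx hxy
  have h2 : (y/x) ^ (q-1) ≤ K ^ (q-1) := by
    apply Real.rpow_le_rpow (div_nonneg (by linarith) hx0.le) ((div_le_iff₀ hx0).mpr hK) (by linarith)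
  have := h.deriv_pos x hx0
  nlinarith

theorem phi'_nonneg (h : IsNFun φ φ' φ'' p q) {s : ℝ} (hs : 0 ≤ s) : 0 ≤ φ' s := by
  rcases eq_or_lt_of_le hs with h0 | h0
  · rw [← h0, h.deriv_zero]
  · exact (h.deriv_pos s h0).le

theorem hh_nonneg (h : IsNFun φ φ' φ'' p q) {σ r : ℝ} (hσ : 1 ≤ σ) (hr : 0 ≤ r) :
    0 ≤ hh φ' σ r := by
  have : (0:ℝ) < σ + r := by linarith
  exact div_nonneg (mul_nonneg (phi'_nonneg h (by linarith)) hr) this.le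

theorem KK_nonneg (h : IsNFun φ φ' φ'' p q) {σ r : ℝ} (hσ : 1 ≤ σ) (hr : 0 ≤ r) :
    0 ≤ KK φ' σ r := by
  have : (0:ℝ) < σ + r := by linarith
  exact div_nonneg (mul_nonneg (phi'_nonneg h (by linarith)) (sq_nonneg r)) this.le

theorem hh_mono (h : IsNFun φ φ' φ'' p q) {σ r₁ r₂ : ℝ} (hσ : 1 ≤ σ)
    (h1 : 0 ≤ r₁) (h12 : r₁ ≤ r₂) : hh φ' σ r₁ ≤ hh φ' σ r₂ := by
  have d1 : (0:ℝ) < σ + r₁ := by linarith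
  have d2 : (0:ℝ) < σ + r₂ := by linarith
  have hφ : φ' (σ + r₁) ≤ φ' (σ + r₂) :=
    h.deriv_mono (by simp; linarith) (by simp; linarith) (by linarith)
  have hφ0 : 0 ≤ φ' (σ + r₁) := phi'_nonneg h (by linarith)
  have hr : r₁ / (σ + r₁) ≤ r₂ / (σ + r₂) := by
    rw [div_le_div_iff₀ d1 d2]; nlinarith
  have e1 : hh φ' σ r₁ = φ' (σ + r₁) * (r₁ / (σ + r₁)) := by rw [hh, mul_div_assoc]
  have e2 : hh φ' σ r₂ = φ' (σ + r₂) * (r₂ / (σ + r₂)) := by rw [hh, mul_div_assoc]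
  rw [e1, e2]
  exact mul_le_mul hφ hr (div_nonneg h1 d1.le) (phi'_nonneg h (by linarith))

theorem KK_mono (h : IsNFun φ φ' φ'' p q) {σ r₁ r₂ : ℝ} (hσ : 1 ≤ σ)
    (h1 : 0 ≤ r₁) (h12 : r₁ ≤ r₂) : KK φ' σ r₁ ≤ KK φ' σ r₂ := by
  have d1 : (0:ℝ) < σ + r₁ := by linarith
  have d2 : (0:ℝ) < σ + r₂ := by linarith
  have hφ : φ' (σ + r₁) ≤ φ' (σ + r₂) :=
    h.deriv_mono (by simp; linarith) (by simp; linarith) (by linarith)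
  have hr : r₁ ^ 2 / (σ + r₁) ≤ r₂ ^ 2 / (σ + r₂) := by
    rw [div_le_div_iff₀ d1 d2]
    have t1 : 0 ≤ σ * (r₂^2 - r₁^2) := mul_nonneg (by linarith) (by nlinarith)
    have t2 : 0 ≤ r₁ * r₂ * (r₂ - r₁) :=
      mul_nonneg (mul_nonneg h1 (h1.trans h12)) (by linarith)
    nlinarith [t1, t2]
  have e1 : KK φ' σ r₁ = φ' (σ + r₁) * (r₁ ^ 2 / (σ + r₁)) := by rw [KK, mul_div_assoc]
  have e2 : KK φ' σ r₂ = φ' (σ + r₂) * (r₂ ^ 2 / (σ + r₂)) := by rw [KK, mul_div_assoc]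
  rw [e1, e2]
  exact mul_le_mul hφ hr (div_nonneg (sq_nonneg _) d1.le) (phi'_nonneg h (by linarith))

theorem hh_double (h : IsNFun φ φ' φ'' p q) (hq : 1 ≤ q) {σ r : ℝ}
    (hσ : 1 ≤ σ) (hr : 0 ≤ r) : hh φ' σ (2 * r) ≤ (2:ℝ) ^ (q - 1) * 2 * hh φ' σ r := by
  have d1 : (0:ℝ) < σ + r := by linarith
  have d2 : (0:ℝ) < σ + 2 * r := by linarith
  have hφ : φ' (σ + 2 * r) ≤ (2:ℝ) ^ (q - 1) * φ' (σ + r) :=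
    phi'_ratio' h hq (by linarith) (by linarith) (by linarith) one_le_two
  have hφ0 : 0 ≤ φ' (σ + 2 * r) := phi'_nonneg h (by linarith)
  have hP : (0:ℝ) < (2:ℝ) ^ (q - 1) := Real.rpow_pos_of_pos two_pos _
  have hrr : 2 * r / (σ + 2 * r) ≤ 2 * (r / (σ + r)) := by
    rw [← mul_div_assoc, div_le_div_iff₀ d2 d1]
    nlinarith [mul_nonneg hr hr]
  have e1 : hh φ' σ (2*r) = φ' (σ + 2*r) * (2*r / (σ + 2*r)) := by rw [hh, mul_div_assoc]
  have e2 : (2:ℝ) ^ (q-1) * 2 * hh φ' σ r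
      = ((2:ℝ) ^ (q-1) * φ' (σ + r)) * (2 * (r / (σ + r))) := by rw [hh, mul_div_assoc]; ring
  rw [e1, e2]
  exact mul_le_mul hφ hrr (div_nonneg (by linarith) d2.le)
    (mul_nonneg hP.le (phi'_nonneg h (by linarith)))

/-- explicit derivative of `t ↦ KK φ' 1 t` -/
noncomputable def KKd (φ' φ'' : ℝ → ℝ) (t : ℝ) : ℝ :=
  ((φ'' (1 + t) * 1 * t ^ 2 + φ' (1 + t) * (2 * t)) * (1 + t) - φ' (1 + t) * t ^ 2 * 1) /
    (1 + t) ^ 2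

theorem KK_hasDerivAt (h : IsNFun φ φ' φ'' p q) {t : ℝ} (ht : 0 < t) :
    HasDerivAt (fun t => KK φ' 1 t) (KKd φ' φ'' t) t := by
  have h1t : (0:ℝ) < 1 + t := by linarith
  have hi : HasDerivAt (fun t : ℝ => 1 + t) 1 t := by
    simpa using (hasDerivAt_id t).const_add (1:ℝ)
  have h1 : HasDerivAt (fun t : ℝ => φ' (1 + t)) (φ'' (1 + t) * 1) t :=
    (hasDerivAt_phi' h h1t).comp t hi
  have h2 : HasDerivAt (fun t : ℝ => t ^ 2) (2 * t) t := by
    simpa using hasDerivAt_pow 2 t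
  have h3 := (h1.mul h2).div hi (ne_of_gt h1t)
  exact h3

theorem KKd_ge (h : IsNFun φ φ' φ'' p q) (hp1 : 1 ≤ p) {t : ℝ} (ht : 0 < t) :
    hh φ' 1 t ≤ KKd φ' φ'' t := by
  have h1t : (0:ℝ) < 1 + t := by linarith
  have f1 : 0 ≤ (1 + t) * φ'' (1 + t) := idx_low' h hp1 h1t
  have f0 : 0 ≤ φ' (1 + t) := phi'_nonneg h h1t.le
  rw [hh, KKd, div_le_div_iff₀ h1t (by positivity)]
  nlinarith [mul_nonneg f1 (sq_nonneg t)]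

theorem KKd_le (h : IsNFun φ φ' φ'' p q) (hq : 1 ≤ q) {t : ℝ} (ht : 0 < t) :
    KKd φ' φ'' t ≤ (q + 2) * hh φ' 1 t := by
  have h1t : (0:ℝ) < 1 + t := by linarith
  have f2 : (1 + t) * φ'' (1 + t) ≤ (q - 1) * φ' (1 + t) := idx_high' h h1t
  have f0 : 0 ≤ φ' (1 + t) := phi'_nonneg h h1t.le
  have e : (q + 2) * hh φ' 1 t = (q + 2) * (φ' (1 + t) * t) / (1 + t) := by
    rw [hh]; ring
  rw [KKd, e, div_le_div_iff₀ (by positivity) h1t]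
  nlinarith [mul_le_mul_of_nonneg_right f2 (mul_nonneg (sq_nonneg t) h1t.le),
    mul_nonneg (mul_nonneg (mul_nonneg f0 ht.le) h1t.le) (by linarith : (0:ℝ) ≤ q),
    mul_nonneg (mul_nonneg (mul_nonneg f0 ht.le) h1t.le) ht.le]

theorem cont1 (h : IsNFun φ φ' φ'' p q) : ContinuousOn (fun t : ℝ => φ' (1 + t)) (Ici 0) := by
  apply h.derivCont.comp (Continuous.continuousOn (by continuity))
  intro t ht; simp at *; linarith

theorem KK_contOn (h : IsNFun φ φ' φ'' p q) : ContinuousOn (fun t => KK φ' 1 t) (Ici 0) := by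
  apply ContinuousOn.div
  · exact (cont1 h).mul (by fun_prop)
  · fun_prop
  · intro t ht; simp at ht ⊢; intro he; linarith

theorem G_sub_upper (h : IsNFun φ φ' φ'' p q) (hq : 1 ≤ q) {a b : ℝ}
    (ha : 0 ≤ a) (hab : a ≤ b) :
    KK φ' 1 b - KK φ' 1 a ≤ (q + 2) * hh φ' 1 b * (b - a) := by
  have mono : MonotoneOn (fun t => (q + 2) * hh φ' 1 b * t - KK φ' 1 t) (Icc a b) := by
    apply monotoneOn_of_hasDerivWithinAt_nonneg (convex_Icc a b)
      (f' := fun t => (q + 2) * hh φ' 1 b - KKd φ' φ'' t)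
    · apply ContinuousOn.sub (by fun_prop)
      exact (KK_contOn h).mono (fun t htt => by simp at *; linarith [htt.1])
    · intro t htt
      rw [interior_Icc] at htt
      have ht : 0 < t := lt_of_le_of_lt ha htt.1
      exact (((hasDerivAt_const t ((q+2) * hh φ' 1 b)).mul (hasDerivAt_id t)).sub
        (KK_hasDerivAt h ht)).hasDerivWithinAt.congr_deriv (by simp)
    · intro t htt
      rw [interior_Icc] at htt
      have ht : 0 < t := lt_of_le_of_lt ha htt.1
      have h1 := KKd_le h hq ht
      have h2 : hh φ' 1 t ≤ hh φ' 1 b := hh_mono h le_rfl ht.le htt.2.le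
      have : 0 ≤ hh φ' 1 t := hh_nonneg h le_rfl ht.le
      nlinarith
  have := mono (left_mem_Icc.mpr hab) (right_mem_Icc.mpr hab) hab
  simp only at this; linarith

theorem G_sub_lower (h : IsNFun φ φ' φ'' p q) (hp1 : 1 ≤ p) {m b : ℝ}
    (hm : 0 < m) (hmb : m ≤ b) :
    hh φ' 1 m * (b - m) ≤ KK φ' 1 b - KK φ' 1 m := by
  have mono : MonotoneOn (fun t => KK φ' 1 t - hh φ' 1 m * t) (Icc m b) := by
    apply monotoneOn_of_hasDerivWithinAt_nonneg (convex_Icc m b)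
      (f' := fun t => KKd φ' φ'' t - hh φ' 1 m)
    · apply ContinuousOn.sub
      · exact (KK_contOn h).mono (fun t htt => by simp at *; linarith [htt.1])
      · fun_prop
    · intro t htt
      rw [interior_Icc] at htt
      have ht : 0 < t := lt_trans hm htt.1
      exact ((KK_hasDerivAt h ht).sub
        ((hasDerivAt_const t (hh φ' 1 m)).mul (hasDerivAt_id t))).hasDerivWithinAt.congr_deriv
        (by simp)
    · intro t htt
      rw [interior_Icc] at htt
      have ht : 0 < t := lt_trans hm htt.1
      have h1 := KKd_ge h hp1 ht
      have h2 : hh φ' 1 m ≤ hh φ' 1 t := hh_mono h le_rfl hm.le htt.1.le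
      linarith
  have h9 : KK φ' 1 m - hh φ' 1 m * m ≤ KK φ' 1 b - hh φ' 1 m * b :=
    mono (left_mem_Icc.mpr hmb) (right_mem_Icc.mpr hmb) hmb
  linarith

theorem Om_nonneg (h : IsNFun φ φ' φ'' p q) {b : ℝ} (hb : 0 ≤ b) : 0 ≤ Om φ' b :=
  div_nonneg (phi'_nonneg h (by linarith)) (by linarith)

theorem Om_pos (h : IsNFun φ φ' φ'' p q) {b : ℝ} (hb : 0 ≤ b) : 0 < Om φ' b :=
  div_pos (h.deriv_pos _ (by linarith)) (by linarith)

theorem FF_eq (h : IsNFun φ φ' φ'' p q) {b : ℝ} (hb : 0 ≤ b) :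
    Real.sqrt (KK φ' 1 b) = Real.sqrt (Om φ' b) * b := by
  have e : KK φ' 1 b = Om φ' b * b ^ 2 := by rw [KK, Om]; ring
  rw [e, Real.sqrt_mul (Om_nonneg h hb), Real.sqrt_sq hb]

theorem hh_eq (b : ℝ) : hh φ' 1 b = Om φ' b * b := by rw [hh, Om]; ring

theorem F_le_F (h : IsNFun φ φ' φ'' p q) {a b : ℝ} (ha : 0 ≤ a) (hab : a ≤ b) :
    Real.sqrt (KK φ' 1 a) ≤ Real.sqrt (KK φ' 1 b) :=
  Real.sqrt_le_sqrt (KK_mono h le_rfl ha hab)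

theorem scalar_upper (h : IsNFun φ φ' φ'' p q) (hq : 1 ≤ q) {a b : ℝ}
    (ha : 0 ≤ a) (hab : a ≤ b) :
    Real.sqrt (KK φ' 1 b) - Real.sqrt (KK φ' 1 a)
      ≤ (q + 2) * Real.sqrt (Om φ' b) * (b - a) := by
  rcases eq_or_lt_of_le (ha.trans hab) with hb0 | hb0
  · have ha0 : a = 0 := le_antisymm (by linarith) ha
    rw [← hb0, ha0]; simp
  set Fa := Real.sqrt (KK φ' 1 a) with hFa
  set Fb := Real.sqrt (KK φ' 1 b) with hFb
  have hOm : 0 < Om φ' b := Om_pos h (ha.trans hab)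
  have hFbe : Fb = Real.sqrt (Om φ' b) * b := FF_eq h (ha.trans hab)
  have hFb_pos : 0 < Fb := by
    rw [hFbe]; exact mul_pos (Real.sqrt_pos.mpr hOm) hb0
  have hFab : Fa ≤ Fb := F_le_F h ha hab
  have hFa0 : 0 ≤ Fa := Real.sqrt_nonneg _
  have k1 : Fb ^ 2 - Fa ^ 2 = KK φ' 1 b - KK φ' 1 a := by
    rw [hFa, hFb, Real.sq_sqrt (KK_nonneg h le_rfl ha),
      Real.sq_sqrt (KK_nonneg h le_rfl (ha.trans hab))]
  have k2 := G_sub_upper h hq ha hab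
  have key : (Fb - Fa) * Fb ≤ ((q + 2) * Real.sqrt (Om φ' b) * (b - a)) * Fb := by
    have ss : Real.sqrt (Om φ' b) * Real.sqrt (Om φ' b) = Om φ' b :=
      Real.mul_self_sqrt hOm.le
    have e2 : ((q + 2) * Real.sqrt (Om φ' b) * (b - a)) * Fb
        = (q + 2) * hh φ' 1 b * (b - a) := by
      rw [hFbe, hh_eq]; linear_combination ((q+2)*(b-a)*b) * ss
    calc (Fb - Fa) * Fb ≤ (Fb - Fa) * (Fb + Fa) :=
          mul_le_mul_of_nonneg_left (by linarith) (by linarith)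
    _ = Fb ^ 2 - Fa ^ 2 := by ring
    _ = KK φ' 1 b - KK φ' 1 a := k1
    _ ≤ (q + 2) * hh φ' 1 b * (b - a) := k2
    _ = ((q + 2) * Real.sqrt (Om φ' b) * (b - a)) * Fb := e2.symm
  exact le_of_mul_le_mul_right key hFb_pos

theorem scalar_lower (h : IsNFun φ φ' φ'' p q) (hp1 : 1 ≤ p) (hq : 1 ≤ q) {a b : ℝ}
    (ha : 0 ≤ a) (hab : a ≤ b) :
    Real.sqrt (Om φ' b) * (b - a)
      ≤ (2:ℝ) ^ (q - 1) * 8 * (Real.sqrt (KK φ' 1 b) - Real.sqrt (KK φ' 1 a)) := by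
  rcases eq_or_lt_of_le (ha.trans hab) with hb0 | hb0
  · have ha0 : a = 0 := le_antisymm (by linarith) ha
    rw [← hb0, ha0]; simp
  set Fa := Real.sqrt (KK φ' 1 a) with hFa
  set Fb := Real.sqrt (KK φ' 1 b) with hFb
  set m := (a + b) / 2 with hm
  have hm0 : 0 < m := by rw [hm]; linarith
  have hmb : m ≤ b := by rw [hm]; linarith
  have ham : a ≤ m := by rw [hm]; linarith
  have hOm : 0 < Om φ' b := Om_pos h (ha.trans hab)
  have hFbe : Fb = Real.sqrt (Om φ' b) * b := FF_eq h (ha.trans hab)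
  have hFb_pos : 0 < Fb := by
    rw [hFbe]; exact mul_pos (Real.sqrt_pos.mpr hOm) hb0
  have hFab : Fa ≤ Fb := F_le_F h ha hab
  have hFa0 : 0 ≤ Fa := Real.sqrt_nonneg _
  have k1 : Fb ^ 2 - Fa ^ 2 = KK φ' 1 b - KK φ' 1 a := by
    rw [hFa, hFb, Real.sq_sqrt (KK_nonneg h le_rfl ha),
      Real.sq_sqrt (KK_nonneg h le_rfl (ha.trans hab))]
  have k2 : hh φ' 1 m * ((b - a) / 2) ≤ KK φ' 1 b - KK φ' 1 a := by
    have := G_sub_lower h hp1 hm0 hmb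
    have h4 : KK φ' 1 a ≤ KK φ' 1 m := KK_mono h le_rfl ha ham
    have e : b - m = (b - a) / 2 := by rw [hm]; ring
    rw [e] at this; linarith
  have k3 : hh φ' 1 b ≤ (2:ℝ) ^ (q - 1) * 2 * hh φ' 1 m := by
    calc hh φ' 1 b ≤ hh φ' 1 (2 * m) := hh_mono h le_rfl (ha.trans hab) (by rw [hm]; linarith)
    _ ≤ (2:ℝ) ^ (q - 1) * 2 * hh φ' 1 m := hh_double h hq le_rfl hm0.le
  have hP : (0:ℝ) < (2:ℝ) ^ (q - 1) := Real.rpow_pos_of_pos two_pos _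
  have hhm0 : 0 ≤ hh φ' 1 m := hh_nonneg h le_rfl hm0.le
  have key : (Real.sqrt (Om φ' b) * (b - a)) * Fb
      ≤ ((2:ℝ) ^ (q - 1) * 8 * (Fb - Fa)) * Fb := by
    have ss : Real.sqrt (Om φ' b) * Real.sqrt (Om φ' b) = Om φ' b :=
      Real.mul_self_sqrt hOm.le
    have e1 : (Real.sqrt (Om φ' b) * (b - a)) * Fb = hh φ' 1 b * (b - a) := by
      rw [hFbe, hh_eq]; linear_combination ((b-a)*b) * ss
    have c2 : hh φ' 1 b * (b - a) ≤ ((2:ℝ) ^ (q - 1) * 2 * hh φ' 1 m) * (b - a) :=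
      mul_le_mul_of_nonneg_right k3 (by linarith)
    have c4 : hh φ' 1 m * ((b - a) / 2) ≤ (Fb - Fa) * (Fb + Fa) := by
      calc hh φ' 1 m * ((b - a) / 2) ≤ KK φ' 1 b - KK φ' 1 a := k2
      _ = Fb ^ 2 - Fa ^ 2 := k1.symm
      _ = (Fb - Fa) * (Fb + Fa) := by ring
    have c5 : (Fb - Fa) * (Fb + Fa) ≤ (Fb - Fa) * (2 * Fb) :=
      mul_le_mul_of_nonneg_left (by linarith) (by linarith)
    calc (Real.sqrt (Om φ' b) * (b - a)) * Fb = hh φ' 1 b * (b - a) := e1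
    _ ≤ ((2:ℝ) ^ (q - 1) * 2 * hh φ' 1 m) * (b - a) := c2
    _ = ((2:ℝ) ^ (q - 1) * 4) * (hh φ' 1 m * ((b - a) / 2)) := by ring
    _ ≤ ((2:ℝ) ^ (q - 1) * 4) * ((Fb - Fa) * (2 * Fb)) := by
        apply mul_le_mul_of_nonneg_left _ (by positivity)
        exact c4.trans c5
    _ = ((2:ℝ) ^ (q - 1) * 8 * (Fb - Fa)) * Fb := by ring
  exact le_of_mul_le_mul_right key hFb_pos



namespace V2

theorem interp {A1 B1 A2 B2 D M : ℝ} (hD0 : 0 ≤ D) (hDM : D ≤ M)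
    (h0 : A1 ≤ A2) (hM : A1 + M * B1 ≤ A2 + M * B2) :
    A1 + D * B1 ≤ A2 + D * B2 := by
  rcases eq_or_lt_of_le (hD0.trans hDM) with hM0 | hM0
  · have hD : D = 0 := le_antisymm (hM0 ▸ hDM) hD0
    rw [hD]; simpa using h0
  · nlinarith [mul_le_mul_of_nonneg_left (show M * B1 - M * B2 ≤ A2 - A1 by linarith) hD0,
      mul_le_mul_of_nonneg_right hDM (show (0:ℝ) ≤ A2 - A1 by linarith)]

end V2

variable {E : Type*} [NormedAddCommGroup E] [InnerProductSpace ℝ E]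

theorem Vfun_eq (A : E) : Vfun φ' A = Real.sqrt (Om φ' ‖A‖) • A := rfl

theorem norm_Vfun (A : E) : ‖Vfun φ' A‖ = Real.sqrt (Om φ' ‖A‖) * ‖A‖ := by
  rw [Vfun_eq, norm_smul, Real.norm_eq_abs, abs_of_nonneg (Real.sqrt_nonneg _)]

theorem norm_Vfun_sq (h : IsNFun φ φ' φ'' p q) (A : E) :
    ‖Vfun φ' A‖ ^ 2 = Om φ' ‖A‖ * ‖A‖ ^ 2 := by
  rw [norm_Vfun, mul_pow, Real.sq_sqrt (Om_nonneg h (norm_nonneg A))]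

theorem inner_Vfun (A B : E) : ⟪Vfun φ' A, Vfun φ' B⟫_ℝ
    = Real.sqrt (Om φ' ‖A‖) * Real.sqrt (Om φ' ‖B‖) * ⟪A, B⟫_ℝ := by
  rw [Vfun_eq, Vfun_eq, real_inner_smul_left, real_inner_smul_right]; ring

set_option maxHeartbeats 1000000 in
theorem vec_upper (h : IsNFun φ φ' φ'' p q) (hq : 1 ≤ q) (A B : E) (hab : ‖A‖ ≤ ‖B‖) :
    ‖Vfun φ' A - Vfun φ' B‖ ^ 2 ≤ 4 * (q+2)^2 * (Om φ' ‖B‖ * ‖A - B‖ ^ 2) := by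
  set a := ‖A‖ with ha'
  set b := ‖B‖ with hb'
  have ha0 : 0 ≤ a := norm_nonneg A
  have hb0 : 0 ≤ b := norm_nonneg B
  set sa := Real.sqrt (Om φ' a) with hsa
  set sb := Real.sqrt (Om φ' b) with hsb
  set ip := ⟪A, B⟫_ℝ with hip
  set D := a * b - ip with hD
  have sa2 : sa * sa = Om φ' a := Real.mul_self_sqrt (Om_nonneg h ha0)
  have sb2 : sb * sb = Om φ' b := Real.mul_self_sqrt (Om_nonneg h hb0)
  have hOmb : 0 ≤ Om φ' b := Om_nonneg h hb0
  have idL : ‖Vfun φ' A - Vfun φ' B‖ ^ 2 = (sb*b - sa*a)^2 + D * (2*(sa*sb)) := by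
    rw [norm_sub_sq_real, inner_Vfun, norm_Vfun_sq h A, norm_Vfun_sq h B]
    rw [hD]
    linear_combination (-(a^2)) * sa2 + (-(b^2)) * sb2
  have idR : ‖A - B‖ ^ 2 = (b - a)^2 + D * 2 := by
    rw [norm_sub_sq_real, hD]; ring
  have hD0 : 0 ≤ D := sub_nonneg.mpr (real_inner_le_norm A B)
  have hDM : D ≤ 2 * (a * b) := by
    have := abs_real_inner_le_norm A B
    have : -(a*b) ≤ ip := neg_le_of_abs_le this
    rw [hD]; linarith
  have hFab : sa * a ≤ sb * b := by
    rw [← FF_eq h ha0, ← FF_eq h hb0]; exact F_le_F h ha0 hab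
  have hFa0 : 0 ≤ sa * a := mul_nonneg (Real.sqrt_nonneg _) ha0
  have e0 : (sb*b - sa*a)^2 ≤ 4*(q+2)^2 * (Om φ' b * (b-a)^2) := by
    have su := scalar_upper h hq ha0 hab
    rw [FF_eq h ha0, FF_eq h hb0] at su
    have h2 := pow_le_pow_left₀ (by linarith) su 2
    have e : ((q+2) * sb * (b-a))^2 = (q+2)^2 * (Om φ' b * (b-a)^2) := by
      linear_combination ((q+2)^2 * (b-a)^2) * sb2
    have hX : 0 ≤ (q+2)^2 * (Om φ' b * (b-a)^2) :=
      mul_nonneg (sq_nonneg _) (mul_nonneg hOmb (sq_nonneg _))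
    calc (sb*b - sa*a)^2 ≤ (q+2)^2 * (Om φ' b * (b-a)^2) := le_of_le_of_eq h2 e
    _ ≤ 4*((q+2)^2 * (Om φ' b * (b-a)^2)) := by linarith
    _ = 4*(q+2)^2 * (Om φ' b * (b-a)^2) := by ring
  have eM : (sb*b - sa*a)^2 + (2*(a*b)) * (2*(sa*sb))
      ≤ 4*(q+2)^2 * (Om φ' b * (b-a)^2) + (2*(a*b)) * (4*(q+2)^2 * (2 * Om φ' b)) := by
    have l1 : (sb*b - sa*a)^2 + (2*(a*b)) * (2*(sa*sb)) = (sa*a + sb*b)^2 := by ring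
    have l2 : (sa*a + sb*b)^2 ≤ (2*(sb*b))^2 := by nlinarith [hFab, hFa0]
    have l3 : (2*(sb*b))^2 = 4 * (Om φ' b * b^2) := by
      linear_combination (4*b^2) * sb2
    have l4 : 4*(q+2)^2 * (Om φ' b * (b-a)^2) + (2*(a*b)) * (4*(q+2)^2 * (2 * Om φ' b))
        = 4*(q+2)^2 * (Om φ' b * (a+b)^2) := by ring
    have l5 : 4 * (Om φ' b * b^2) ≤ 4*(q+2)^2 * (Om φ' b * (a+b)^2) := by
      have b1 : Om φ' b * b^2 ≤ Om φ' b * (a+b)^2 :=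
        mul_le_mul_of_nonneg_left (by nlinarith) hOmb
      have b2 : 0 ≤ Om φ' b * (a+b)^2 := mul_nonneg hOmb (sq_nonneg _)
      have b3 : (1:ℝ) ≤ (q+2)^2 := by nlinarith
      have b4 : Om φ' b * (a+b)^2 ≤ (q+2)^2 * (Om φ' b * (a+b)^2) :=
        le_mul_of_one_le_left b2 b3
      calc 4 * (Om φ' b * b^2) ≤ 4 * (Om φ' b * (a+b)^2) := by linarith
      _ ≤ 4 * ((q+2)^2 * (Om φ' b * (a+b)^2)) := by linarith
      _ = 4*(q+2)^2 * (Om φ' b * (a+b)^2) := by ring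
    rw [l1, l4]; linarith
  have final := V2.interp hD0 hDM e0 eM
  rw [idL, idR]
  have expand : 4*(q+2)^2 * (Om φ' b * ((b-a)^2 + D*2))
      = 4*(q+2)^2 * (Om φ' b * (b-a)^2) + D * (4*(q+2)^2 * (2 * Om φ' b)) := by ring
  rw [expand]; linarith

set_option maxHeartbeats 1000000 in
theorem vec_lower (h : IsNFun φ φ' φ'' p q) (hp1 : 1 ≤ p) (hq : 1 ≤ q) (A B : E)
    (hab : ‖A‖ ≤ ‖B‖) :
    Om φ' ‖B‖ * ‖A - B‖ ^ 2
      ≤ ((2:ℝ)^(q-1)*8)^2 * 4 * ‖Vfun φ' A - Vfun φ' B‖ ^ 2 := by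
  set a := ‖A‖ with ha'
  set b := ‖B‖ with hb'
  have ha0 : 0 ≤ a := norm_nonneg A
  have hb0 : 0 ≤ b := norm_nonneg B
  set sa := Real.sqrt (Om φ' a) with hsa
  set sb := Real.sqrt (Om φ' b) with hsb
  set ip := ⟪A, B⟫_ℝ with hip
  set D := a * b - ip with hD
  have sa2 : sa * sa = Om φ' a := Real.mul_self_sqrt (Om_nonneg h ha0)
  have sb2 : sb * sb = Om φ' b := Real.mul_self_sqrt (Om_nonneg h hb0)
  have hOmb : 0 ≤ Om φ' b := Om_nonneg h hb0
  have hP : (0:ℝ) < (2:ℝ)^(q-1) := Real.rpow_pos_of_pos two_pos _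
  set C := ((2:ℝ)^(q-1)*8)^2 * 4 with hC
  have hC4 : 4 ≤ C := by
    have h1 : (1:ℝ) ≤ (2:ℝ)^(q-1) := Real.one_le_rpow one_le_two (by linarith)
    rw [hC]; nlinarith
  have hC0 : 0 < C := by linarith
  have idL : ‖Vfun φ' A - Vfun φ' B‖ ^ 2 = (sb*b - sa*a)^2 + D * (2*(sa*sb)) := by
    rw [norm_sub_sq_real, inner_Vfun, norm_Vfun_sq h A, norm_Vfun_sq h B, hD]
    linear_combination (-(a^2)) * sa2 + (-(b^2)) * sb2
  have idR : ‖A - B‖ ^ 2 = (b - a)^2 + D * 2 := by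
    rw [norm_sub_sq_real, hD]; ring
  have hD0 : 0 ≤ D := sub_nonneg.mpr (real_inner_le_norm A B)
  have hDM : D ≤ 2 * (a * b) := by
    have h1 := abs_real_inner_le_norm A B
    have : -(a*b) ≤ ip := neg_le_of_abs_le h1
    rw [hD]; linarith
  have hFab : sa * a ≤ sb * b := by
    rw [← FF_eq h ha0, ← FF_eq h hb0]; exact F_le_F h ha0 hab
  have hFa0 : 0 ≤ sa * a := mul_nonneg (Real.sqrt_nonneg _) ha0
  have e0 : Om φ' b * (b-a)^2 ≤ C * (sb*b - sa*a)^2 := by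
    have sl := scalar_lower h hp1 hq ha0 hab
    rw [FF_eq h ha0, FF_eq h hb0] at sl
    have h0 : 0 ≤ sb * (b - a) := mul_nonneg (Real.sqrt_nonneg _) (by linarith)
    have h2 := pow_le_pow_left₀ h0 sl 2
    have e : (sb * (b-a))^2 = Om φ' b * (b-a)^2 := by
      linear_combination ((b-a)^2) * sb2
    have e2 : ((2:ℝ)^(q-1)*8*(sb*b - sa*a))^2 = ((2:ℝ)^(q-1)*8)^2 * (sb*b - sa*a)^2 := by
      ring
    rw [e, e2] at h2
    have b2 : 0 ≤ ((2:ℝ)^(q-1)*8)^2 * (sb*b - sa*a)^2 :=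
      mul_nonneg (sq_nonneg _) (sq_nonneg _)
    calc Om φ' b * (b-a)^2 ≤ ((2:ℝ)^(q-1)*8)^2 * (sb*b - sa*a)^2 := h2
    _ ≤ 4 * (((2:ℝ)^(q-1)*8)^2 * (sb*b - sa*a)^2) := by linarith
    _ = C * (sb*b - sa*a)^2 := by rw [hC]; ring
  have eM : Om φ' b * (b-a)^2 + (2*(a*b)) * (2 * Om φ' b)
      ≤ C * (sb*b - sa*a)^2 + (2*(a*b)) * (C * (2*(sa*sb))) := by
    have l1 : C * (sb*b - sa*a)^2 + (2*(a*b)) * (C * (2*(sa*sb)))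
        = C * (sa*a + sb*b)^2 := by ring
    have l2 : Om φ' b * (b-a)^2 + (2*(a*b)) * (2 * Om φ' b) = Om φ' b * (a+b)^2 := by ring
    have l3 : Om φ' b * (a+b)^2 ≤ 4 * (Om φ' b * b^2) := by
      have := mul_le_mul_of_nonneg_left (show (a+b)^2 ≤ 4*b^2 by nlinarith) hOmb
      linarith [this]
    have l4 : 4 * (Om φ' b * b^2) = 4 * (sb*b)^2 := by
      linear_combination (-(4*b^2)) * sb2
    have l5 : 4 * (sb*b)^2 ≤ 4 * (sa*a + sb*b)^2 := by nlinarith [hFab, hFa0]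
    have l6 : 4 * (sa*a + sb*b)^2 ≤ C * (sa*a + sb*b)^2 :=
      mul_le_mul_of_nonneg_right hC4 (sq_nonneg _)
    rw [l1, l2]; linarith
  have final := V2.interp hD0 hDM e0 eM
  rw [idL, idR]
  have expand : C * ((sb*b - sa*a)^2 + D * (2*(sa*sb)))
      = C * (sb*b - sa*a)^2 + D * (C * (2*(sa*sb))) := by ring
  rw [expand]
  have expand2 : Om φ' b * ((b-a)^2 + D*2) = Om φ' b * (b-a)^2 + D * (2 * Om φ' b) := by ring
  rw [expand2]; linarith

theorem Om_compare_le (h : IsNFun φ φ' φ'' p q) (hq : 1 ≤ q) {u v : ℝ}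
    (hu : 0 ≤ u) (huv : u ≤ v) (h3 : 1 + v ≤ 3 * (1 + u)) :
    Om φ' v ≤ (3:ℝ)^(q-1) * Om φ' u := by
  have pu : (0:ℝ) < 1 + u := by linarith
  have pv : (0:ℝ) < 1 + v := by linarith
  have h1 : φ' (1+v) ≤ (3:ℝ)^(q-1) * φ' (1+u) :=
    phi'_ratio' h hq (by linarith) (by linarith) (by linarith) (by norm_num)
  have hP : (0:ℝ) ≤ (3:ℝ)^(q-1) := (Real.rpow_pos_of_pos (by norm_num) _).le
  have key : φ' (1+u) ≤ φ' (1+u) / (1+u) * (1+v) := by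
    rw [div_mul_eq_mul_div, le_div_iff₀ pu]
    have := phi'_nonneg h (le_of_lt pu)
    nlinarith
  rw [Om, Om, div_le_iff₀ pv]
  have h2 := mul_le_mul_of_nonneg_left key hP
  calc φ' (1+v) ≤ (3:ℝ)^(q-1) * φ' (1+u) := h1
  _ ≤ (3:ℝ)^(q-1) * (φ' (1+u) / (1+u) * (1+v)) := h2
  _ = (3:ℝ)^(q-1) * (φ' (1+u) / (1+u)) * (1+v) := by ring

theorem Om_compare_ge (h : IsNFun φ φ' φ'' p q) {u v : ℝ}
    (hu : 0 ≤ u) (huv : u ≤ v) (h3 : 1 + v ≤ 3 * (1 + u)) :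
    Om φ' u ≤ 3 * Om φ' v := by
  have pu : (0:ℝ) < 1 + u := by linarith
  have pv : (0:ℝ) < 1 + v := by linarith
  have hφ : φ' (1+u) ≤ φ' (1+v) :=
    h.deriv_mono (by simp; linarith) (by simp; linarith) (by linarith)
  have e : 3 * Om φ' v = 3 * φ' (1+v) / (1+v) := by rw [Om]; ring
  rw [Om, e, div_le_div_iff₀ pu pv]
  have f0 : 0 ≤ φ' (1+u) := phi'_nonneg h pu.le
  nlinarith [mul_le_mul hφ h3 pv.le (phi'_nonneg h pv.le)]

theorem KK_eq_Om (b r : ℝ) : KK φ' (1 + b) r = Om φ' (b + r) * r^2 := by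
  rw [KK, Om, add_assoc]; ring

theorem norm_le_add {E : Type*} [NormedAddCommGroup E] (A B : E) :
    ‖A‖ ≤ ‖B‖ + ‖A - B‖ := by
  calc ‖A‖ = ‖B + (A - B)‖ := by rw [show B + (A - B) = A by abel]
  _ ≤ ‖B‖ + ‖A - B‖ := norm_add_le _ _

theorem pointwise_upper (h : IsNFun φ φ' φ'' p q) (hq : 1 ≤ q) (A B : E) :
    ‖Vfun φ' A - Vfun φ' B‖ ^ 2 ≤ 12 * (q+2)^2 * KK φ' (1 + ‖B‖) ‖A - B‖ := by
  set a := ‖A‖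
  set b := ‖B‖
  set r := ‖A - B‖ with hr
  have ha0 : 0 ≤ a := norm_nonneg A
  have hb0 : 0 ≤ b := norm_nonneg B
  have hr0 : 0 ≤ r := norm_nonneg _
  have hrab : r ≤ a + b := by
    calc r ≤ ‖A‖ + ‖B‖ := norm_sub_le A B
    _ = a + b := rfl
  rw [KK_eq_Om]
  have hOm : 0 ≤ Om φ' (b + r) := Om_nonneg h (by linarith)
  rcases le_total a b with hab | hab
  · have hu := vec_upper h hq A B hab
    have compare : Om φ' b ≤ 3 * Om φ' (b + r) :=
      Om_compare_ge h hb0 (by linarith) (by linarith)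
    have step := mul_le_mul_of_nonneg_right compare (sq_nonneg r)
    calc ‖Vfun φ' A - Vfun φ' B‖ ^ 2 ≤ 4*(q+2)^2 * (Om φ' b * r^2) := hu
    _ ≤ 4*(q+2)^2 * (3 * Om φ' (b+r) * r^2) := by
        apply mul_le_mul_of_nonneg_left _ (by positivity)
        linarith [step]
    _ = 12*(q+2)^2 * (Om φ' (b+r) * r^2) := by ring
  · have hu := vec_upper h hq B A hab
    rw [norm_sub_rev B A, norm_sub_rev (Vfun φ' B) (Vfun φ' A)] at hu
    have compare : Om φ' a ≤ 3 * Om φ' (b + r) :=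
      Om_compare_ge h ha0 (norm_le_add A B) (by linarith)
    have step := mul_le_mul_of_nonneg_right compare (sq_nonneg r)
    calc ‖Vfun φ' A - Vfun φ' B‖ ^ 2 ≤ 4*(q+2)^2 * (Om φ' a * r^2) := hu
    _ ≤ 4*(q+2)^2 * (3 * Om φ' (b+r) * r^2) := by
        apply mul_le_mul_of_nonneg_left _ (by positivity)
        linarith [step]
    _ = 12*(q+2)^2 * (Om φ' (b+r) * r^2) := by ring

theorem pointwise_lower (h : IsNFun φ φ' φ'' p q) (hp1 : 1 ≤ p) (hq : 1 ≤ q) (A B : E) :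
    KK φ' (1 + ‖B‖) ‖A - B‖
      ≤ (3:ℝ)^(q-1) * (((2:ℝ)^(q-1)*8)^2 * 4) * ‖Vfun φ' A - Vfun φ' B‖ ^ 2 := by
  set a := ‖A‖
  set b := ‖B‖
  set r := ‖A - B‖ with hr
  have ha0 : 0 ≤ a := norm_nonneg A
  have hb0 : 0 ≤ b := norm_nonneg B
  have hr0 : 0 ≤ r := norm_nonneg _
  have hrab : r ≤ a + b := by
    calc r ≤ ‖A‖ + ‖B‖ := norm_sub_le A B
    _ = a + b := rfl
  have hP3 : (0:ℝ) ≤ (3:ℝ)^(q-1) := (Real.rpow_pos_of_pos (by norm_num) _).le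
  rw [KK_eq_Om]
  rcases le_total a b with hab | hab
  · have hl := vec_lower h hp1 hq A B hab
    have compare : Om φ' (b + r) ≤ (3:ℝ)^(q-1) * Om φ' b :=
      Om_compare_le h hq hb0 (by linarith) (by linarith)
    have step := mul_le_mul_of_nonneg_right compare (sq_nonneg r)
    calc Om φ' (b+r) * r^2 ≤ (3:ℝ)^(q-1) * Om φ' b * r^2 := step
    _ = (3:ℝ)^(q-1) * (Om φ' b * r^2) := by ring
    _ ≤ (3:ℝ)^(q-1) * ((((2:ℝ)^(q-1)*8)^2 * 4) * ‖Vfun φ' A - Vfun φ' B‖ ^ 2) :=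
        mul_le_mul_of_nonneg_left hl hP3
    _ = (3:ℝ)^(q-1) * (((2:ℝ)^(q-1)*8)^2 * 4) * ‖Vfun φ' A - Vfun φ' B‖ ^ 2 := by ring
  · have hl := vec_lower h hp1 hq B A hab
    rw [norm_sub_rev B A, norm_sub_rev (Vfun φ' B) (Vfun φ' A)] at hl
    have compare : Om φ' (b + r) ≤ (3:ℝ)^(q-1) * Om φ' a :=
      Om_compare_le h hq ha0 (norm_le_add A B) (by linarith)
    have step := mul_le_mul_of_nonneg_right compare (sq_nonneg r)
    calc Om φ' (b+r) * r^2 ≤ (3:ℝ)^(q-1) * Om φ' a * r^2 := step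
    _ = (3:ℝ)^(q-1) * (Om φ' a * r^2) := by ring
    _ ≤ (3:ℝ)^(q-1) * ((((2:ℝ)^(q-1)*8)^2 * 4) * ‖Vfun φ' A - Vfun φ' B‖ ^ 2) :=
        mul_le_mul_of_nonneg_left hl hP3
    _ = (3:ℝ)^(q-1) * (((2:ℝ)^(q-1)*8)^2 * 4) * ‖Vfun φ' A - Vfun φ' B‖ ^ 2 := by ring


theorem KK_eq_hh (σ x : ℝ) : KK φ' σ x = hh φ' σ x * x := by rw [KK, hh]; ring

/-- pointwise Chebyshev-type bound -/
theorem KK_pointwise (h : IsNFun φ φ' φ'' p q) {σ t x : ℝ} (hσ : 1 ≤ σ)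
    (ht : 0 ≤ t) (hx : 0 ≤ x) :
    hh φ' σ (t/2) * (x - t/2) ≤ KK φ' σ x := by
  have hh0 : 0 ≤ hh φ' σ (t/2) := hh_nonneg h hσ (by linarith)
  rcases le_total x (t/2) with hcase | hcase
  · have : hh φ' σ (t/2) * (x - t/2) ≤ 0 := mul_nonpos_of_nonneg_of_nonpos hh0 (by linarith)
    exact this.trans (KK_nonneg h hσ hx)
  · have h1 : hh φ' σ (t/2) ≤ hh φ' σ x := hh_mono h hσ (by linarith) hcase
    rw [KK_eq_hh]
    have : hh φ' σ (t/2) * (x - t/2) ≤ hh φ' σ (t/2) * x :=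
      mul_le_mul_of_nonneg_left (by linarith) hh0
    exact this.trans (mul_le_mul_of_nonneg_right h1 hx)

theorem KK_t_double (h : IsNFun φ φ' φ'' p q) (hq : 1 ≤ q) {σ t : ℝ}
    (hσ : 1 ≤ σ) (ht : 0 ≤ t) :
    KK φ' σ t ≤ (2:ℝ)^(q-1) * 4 * (hh φ' σ (t/2) * (t/2)) := by
  have h1 : hh φ' σ t ≤ (2:ℝ)^(q-1) * 2 * hh φ' σ (t/2) := by
    have h1 := hh_double h hq hσ (show 0 ≤ t/2 by linarith)
    rw [show 2*(t/2) = t by ring] at h1; exact h1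
  rw [KK_eq_hh]
  have hhx : 0 ≤ hh φ' σ t := hh_nonneg h hσ ht
  calc hh φ' σ t * t ≤ ((2:ℝ)^(q-1) * 2 * hh φ' σ (t/2)) * t :=
        mul_le_mul_of_nonneg_right h1 ht
  _ = (2:ℝ)^(q-1) * 4 * (hh φ' σ (t/2) * (t/2)) := by ring

section measure

variable {α : Type*} [MeasurableSpace α] {μ : Measure α} [IsFiniteMeasure μ]

/-- Chebyshev/Jensen-type estimate for `KK`. -/
theorem jensen_step (h : IsNFun φ φ' φ'' p q) (hq : 1 ≤ q) {σ : ℝ} (hσ : 1 ≤ σ)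
    {r : α → ℝ} (hr0 : ∀ z, 0 ≤ r z) (hri : Integrable r μ)
    (hKi : Integrable (fun z => KK φ' σ (r z)) μ)
    (hM : 0 < (μ univ).toReal) :
    (μ univ).toReal * KK φ' σ (⨍ z, r z ∂μ) ≤ (2:ℝ)^(q-1) * 4 * ∫ z, KK φ' σ (r z) ∂μ := by
  set M := (μ univ).toReal with hMdef
  set t := ⨍ z, r z ∂μ with htdef
  have ht0 : 0 ≤ t := by
    rw [htdef, average_eq]
    have : 0 ≤ ∫ z, r z ∂μ := integral_nonneg hr0
    positivity
  have hint : ∫ z, r z ∂μ = M * t := by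
    rw [htdef, average_eq, measureReal_def, ← hMdef, smul_eq_mul, ← mul_assoc, mul_inv_cancel₀ (ne_of_gt hM), one_mul]
  -- integral of pointwise lower bound
  have key : hh φ' σ (t/2) * (t/2) * M ≤ ∫ z, KK φ' σ (r z) ∂μ := by
    have pt : ∀ z, hh φ' σ (t/2) * (r z - t/2) ≤ KK φ' σ (r z) :=
      fun z => KK_pointwise h hσ ht0 (hr0 z)
    have i1 : Integrable (fun z => hh φ' σ (t/2) * (r z - t/2)) μ :=
      (hri.sub (integrable_const _)).const_mul _
    have := integral_mono i1 hKi pt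
    have e1 : ∫ z, hh φ' σ (t/2) * (r z - t/2) ∂μ
        = hh φ' σ (t/2) * (M * t - t/2 * M) := by
      rw [integral_const_mul, integral_sub hri (integrable_const _), hint,
        integral_const, smul_eq_mul, measureReal_def, ← hMdef]
      ring
    rw [e1] at this
    calc hh φ' σ (t/2) * (t/2) * M = hh φ' σ (t/2) * (M * t - t/2 * M) := by ring
    _ ≤ ∫ z, KK φ' σ (r z) ∂μ := this
  have h2 := KK_t_double h hq hσ ht0
  calc M * KK φ' σ t ≤ M * ((2:ℝ)^(q-1) * 4 * (hh φ' σ (t/2) * (t/2))) :=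
        mul_le_mul_of_nonneg_left h2 hM.le
  _ = (2:ℝ)^(q-1) * 4 * (hh φ' σ (t/2) * (t/2) * M) := by ring
  _ ≤ (2:ℝ)^(q-1) * 4 * ∫ z, KK φ' σ (r z) ∂μ := by
      apply mul_le_mul_of_nonneg_left key
      positivity

variable {E : Type*} [NormedAddCommGroup E] [InnerProductSpace ℝ E] [CompleteSpace E]

/-- the mean minimizes the L² deviation: exact identity -/
theorem mean_identity {F : α → E} (hF : Integrable F μ)
    (hF2 : Integrable (fun z => ‖F z‖^2) μ) (a : E) :
    ∫ z, ‖F z - a‖^2 ∂μ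
      = (∫ z, ‖F z - ⨍ w, F w ∂μ‖^2 ∂μ) + (μ univ).toReal * ‖(⨍ w, F w ∂μ) - a‖^2 := by
  set T := ⨍ w, F w ∂μ with hT
  have hFT : Integrable (fun z => F z - T) μ := hF.sub (integrable_const _)
  have hzero : ∫ z, (F z - T) ∂μ = 0 := integral_sub_average μ F
  have iT2 : Integrable (fun z => ‖F z - T‖^2) μ := by
    have e : (fun z => ‖F z - T‖^2) = fun z => ‖F z‖^2 - 2 * ⟪F z, T⟫_ℝ + ‖T‖^2 := by
      funext z; rw [norm_sub_sq_real]
    rw [e]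
    exact (hF2.sub ((hF.inner_const T).const_mul 2)).add (integrable_const _)
  have iInner : Integrable (fun z => 2 * ⟪F z - T, T - a⟫_ℝ) μ :=
    (hFT.inner_const _).const_mul 2
  have ptid : ∀ z, ‖F z - a‖^2 = ‖F z - T‖^2 + (2 * ⟪F z - T, T - a⟫_ℝ + ‖T - a‖^2) := by
    intro z
    have e : F z - a = (F z - T) + (T - a) := by abel
    rw [e, norm_add_sq_real]; ring
  have iz : ∫ z, 2 * ⟪F z - T, T - a⟫_ℝ ∂μ = 0 := by
    rw [integral_const_mul]
    have e : (fun z => ⟪F z - T, T - a⟫_ℝ) = fun z => ⟪T - a, F z - T⟫_ℝ := by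
      funext z; exact real_inner_comm _ _
    rw [e, integral_inner hFT, hzero, inner_zero_right, mul_zero]
  have iBc : Integrable (fun z => 2 * ⟪F z - T, T - a⟫_ℝ + ‖T - a‖^2) μ := by
    exact iInner.add (integrable_const _)
  rw [integral_congr_ae (ae_of_all μ ptid), integral_add iT2 iBc,
    integral_add iInner (integrable_const _), iz, integral_const, zero_add,
    smul_eq_mul]
  rfl

end measure

theorem Om_contOn (h : IsNFun φ φ' φ'' p q) : ContinuousOn (fun b => Om φ' b) (Ici 0) := by
  apply ContinuousOn.div (cont1 h) (by fun_prop)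
  intro t ht; simp at ht ⊢; intro he; linarith

theorem Vfun_cont {E : Type*} [NormedAddCommGroup E] [InnerProductSpace ℝ E]
    (h : IsNFun φ φ' φ'' p q) : Continuous (fun A : E => Vfun φ' A) := by
  show Continuous fun A : E => Real.sqrt (Om φ' ‖A‖) • A
  have h1 : Continuous fun A : E => Om φ' ‖A‖ := by
    have := (Om_contOn h).comp_continuous continuous_norm
      (fun A : E => (norm_nonneg A : ‖A‖ ∈ Ici 0))
    exact this
  exact (Real.continuous_sqrt.comp h1).smul continuous_id

theorem KK_max_cont (h : IsNFun φ φ' φ'' p q) {σ : ℝ} (hσ : 1 ≤ σ) :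
    Continuous (fun x : ℝ => KK φ' σ (max x 0)) := by
  have hpos : ∀ x : ℝ, (0:ℝ) < σ + max x 0 := fun x => by
    have := le_max_right x 0; linarith
  have hc : Continuous (fun x : ℝ => φ' (σ + max x 0)) := by
    have := h.derivCont.comp_continuous
      (continuous_const.add (continuous_id.max continuous_const))
      (fun x : ℝ => (le_of_lt (hpos x) : σ + max x 0 ∈ Ici 0))
    exact this
  show Continuous fun x : ℝ => φ' (σ + max x 0) * (max x 0) ^ 2 / (σ + max x 0)
  apply Continuous.div (hc.mul (by fun_prop)) (by fun_prop)
  exact fun x => ne_of_gt (hpos x)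

theorem exists_V_eq {E : Type*} [NormedAddCommGroup E] [InnerProductSpace ℝ E]
    (h : IsNFun φ φ' φ'' p q) (T : E) : ∃ Q : E, Vfun φ' Q = T := by
  by_cases hT : T = 0
  · exact ⟨0, by simp [Vfun, hT]⟩
  have hT0 : 0 < ‖T‖ := norm_pos_iff.mpr hT
  have hφ1 : 0 < φ' 1 := h.deriv_pos 1 one_pos
  set s₀ : ℝ := ‖T‖^2 / φ' 1 + 1 with hs₀
  have hs₀1 : 1 ≤ s₀ := by
    rw [hs₀]; have : 0 ≤ ‖T‖^2 / φ' 1 := by positivity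
    linarith
  have hs₀0 : (0:ℝ) ≤ s₀ := by linarith
  have hG : ContinuousOn (fun t => KK φ' 1 t) (Icc 0 s₀) :=
    (KK_contOn h).mono Icc_subset_Ici_self
  have h0 : KK φ' 1 0 = 0 := by simp [KK]
  have hsval : ‖T‖^2 ≤ KK φ' 1 s₀ := by
    have p1 : (0:ℝ) < 1 + s₀ := by linarith
    have m1 : φ' 1 ≤ φ' (1 + s₀) :=
      h.deriv_mono (by simp) (by simp; linarith) (by linarith)
    have m2 : s₀ - 1 ≤ s₀^2 / (1 + s₀) := by
      rw [le_div_iff₀ p1]; nlinarith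
    have key : φ' 1 * (s₀ - 1) ≤ φ' (1+s₀) * (s₀^2 / (1+s₀)) :=
      mul_le_mul m1 m2 (by linarith) (phi'_nonneg h p1.le)
    have e1 : φ' 1 * (s₀ - 1) = ‖T‖^2 := by
      rw [hs₀]; field_simp; ring
    have e2 : φ' (1+s₀) * (s₀^2 / (1+s₀)) = KK φ' 1 s₀ := by
      rw [KK]; ring
    rw [← e1, ← e2]; exact key
  have mem : ‖T‖^2 ∈ Icc (KK φ' 1 0) (KK φ' 1 s₀) := by
    rw [h0]; exact ⟨sq_nonneg _, hsval⟩
  obtain ⟨s, hsIcc, hsEq⟩ := intermediate_value_Icc hs₀0 hG mem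
  have hs0 : 0 ≤ s := hsIcc.1
  refine ⟨(s / ‖T‖) • T, ?_⟩
  have hQn : ‖(s / ‖T‖) • T‖ = s := by
    rw [norm_smul, Real.norm_eq_abs, abs_of_nonneg (by positivity)]
    field_simp
  show Real.sqrt (Om φ' ‖(s / ‖T‖) • T‖) • ((s / ‖T‖) • T) = T
  rw [hQn, smul_smul]
  have e3 : Real.sqrt (Om φ' s) * (s / ‖T‖) = 1 := by
    have e4 : Real.sqrt (Om φ' s) * s = ‖T‖ := by
      rw [← FF_eq h hs0]
      simp only at hsEq
      rw [hsEq, Real.sqrt_sq hT0.le]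
    field_simp
    linear_combination e4
  rw [e3, one_smul]

section master

variable {α : Type*} [MeasurableSpace α] {μ : Measure α} [IsFiniteMeasure μ]
variable {E : Type*} [NormedAddCommGroup E] [InnerProductSpace ℝ E] [CompleteSpace E]

theorem master (h : IsNFun φ φ' φ'' p q) (hp1 : 1 ≤ p) (hq1 : 1 ≤ q)
    (hM : 0 < (μ univ).toReal)
    (g : α → E) (hgi : Integrable g μ)
    (hV2 : Integrable (fun z => ‖Vfun φ' (g z)‖^2) μ) :
    (⨍ z, ‖Vfun φ' (g z) - ⨍ w, Vfun φ' (g w) ∂μ‖^2 ∂μ)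
        ≤ (⨍ z, ‖Vfun φ' (g z) - Vfun φ' (⨍ w, g w ∂μ)‖^2 ∂μ) ∧
      (⨍ z, ‖Vfun φ' (g z) - Vfun φ' (⨍ w, g w ∂μ)‖^2 ∂μ)
        ≤ (1 + 12*(q+2)^2 * ((2:ℝ)^(q-1)*4) * ((3:ℝ)^(q-1) * (((2:ℝ)^(q-1)*8)^2*4)))
          * ⨍ z, ‖Vfun φ' (g z) - ⨍ w, Vfun φ' (g w) ∂μ‖^2 ∂μ := by
  set M := (μ univ).toReal with hMdef
  set Clo : ℝ := (3:ℝ)^(q-1) * (((2:ℝ)^(q-1)*8)^2*4) with hClo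
  set Cup : ℝ := 12*(q+2)^2 with hCup
  set V : α → E := fun z => Vfun φ' (g z) with hV
  have hVmeas : AEStronglyMeasurable V μ :=
    (Vfun_cont h).comp_aestronglyMeasurable hgi.aestronglyMeasurable
  have hVi : Integrable V μ := by
    have hgint : Integrable (fun z => 1 + ‖V z‖^2) μ := by
      exact (integrable_const (1:ℝ)).add hV2
    refine hgint.mono' hVmeas (ae_of_all _ fun z => ?_)
    nlinarith [sq_nonneg (‖V z‖ - 1), norm_nonneg (V z)]
  set T := ⨍ w, V w ∂μ with hT
  set P := ⨍ w, g w ∂μ with hP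
  have iT2 : ∀ c : E, Integrable (fun z => ‖V z - c‖^2) μ := by
    intro c
    rw [show (fun z => ‖V z - c‖^2) = fun z => ‖V z‖^2 - 2*⟪V z, c⟫_ℝ + ‖c‖^2 from
      funext fun z => by rw [norm_sub_sq_real]]
    exact (hV2.sub ((hVi.inner_const c).const_mul 2)).add (integrable_const _)
  have id_a : ∀ a : E, ∫ z, ‖V z - a‖^2 ∂μ
      = (∫ z, ‖V z - T‖^2 ∂μ) + M * ‖T - a‖^2 := fun a => mean_identity hVi hV2 a
  have avg_id : ∀ a : E, (⨍ z, ‖V z - a‖^2 ∂μ)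
      = (⨍ z, ‖V z - T‖^2 ∂μ) + ‖T - a‖^2 := by
    intro a
    rw [average_eq, average_eq, id_a a, smul_eq_mul, smul_eq_mul, mul_add, measureReal_def, ← hMdef,
      ← mul_assoc, inv_mul_cancel₀ (ne_of_gt hM), one_mul]
  -- the key quantitative bound
  obtain ⟨Q, hQ⟩ := exists_V_eq h T
  set r : α → ℝ := fun z => ‖g z - Q‖ with hr
  have hr0 : ∀ z, 0 ≤ r z := fun z => norm_nonneg _
  have hri : Integrable r μ := (hgi.sub (integrable_const Q)).norm
  have hσ : (1:ℝ) ≤ 1 + ‖Q‖ := by linarith [norm_nonneg Q]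
  have hKle : ∀ z, KK φ' (1 + ‖Q‖) (r z) ≤ Clo * ‖V z - T‖^2 := by
    intro z
    have := pointwise_lower h hp1 hq1 (g z) Q
    rwa [hQ] at this
  have hKmeas : AEStronglyMeasurable (fun z => KK φ' (1 + ‖Q‖) (r z)) μ := by
    have e : (fun z => KK φ' (1 + ‖Q‖) (r z))
        = fun z => KK φ' (1 + ‖Q‖) (max (r z) 0) := by
      funext z; rw [max_eq_left (hr0 z)]
    rw [e]
    exact (KK_max_cont h hσ).comp_aestronglyMeasurable hri.aestronglyMeasurable
  have hKi : Integrable (fun z => KK φ' (1 + ‖Q‖) (r z)) μ := by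
    refine ((iT2 T).const_mul Clo).mono' hKmeas (ae_of_all _ fun z => ?_)
    rw [Real.norm_eq_abs, abs_of_nonneg (KK_nonneg h hσ (hr0 z))]
    exact hKle z
  have hKint_le : ∫ z, KK φ' (1 + ‖Q‖) (r z) ∂μ ≤ Clo * ∫ z, ‖V z - T‖^2 ∂μ := by
    have := integral_mono hKi ((iT2 T).const_mul Clo) hKle
    rwa [integral_const_mul] at this
  set t := ⨍ z, r z ∂μ with ht
  have ht0 : 0 ≤ t := by
    rw [ht, average_eq]
    have : 0 ≤ ∫ z, r z ∂μ := integral_nonneg hr0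
    positivity
  have hPQ : ‖P - Q‖ ≤ t := by
    have e1 : ⨍ z, (g z - Q) ∂μ = P - Q := by
      rw [average_eq, hP, average_eq, integral_sub hgi (integrable_const Q),
        integral_const, smul_sub, smul_smul, measureReal_def, ← hMdef,
        inv_mul_cancel₀ (ne_of_gt hM), one_smul]
    rw [← e1, average_eq, norm_smul, Real.norm_eq_abs, abs_of_nonneg (by positivity),
      ht, average_eq, smul_eq_mul, measureReal_def, ← hMdef]
    exact mul_le_mul_of_nonneg_left
      (norm_integral_le_integral_norm _) (by positivity)
  have hjen := jensen_step h hq1 hσ hr0 hri hKi hM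
  have key2 : ‖T - Vfun φ' P‖^2 ≤ (Cup * ((2:ℝ)^(q-1)*4) * Clo) * ⨍ z, ‖V z - T‖^2 ∂μ := by
    have s1 : ‖T - Vfun φ' P‖^2 ≤ Cup * KK φ' (1 + ‖Q‖) ‖P - Q‖ := by
      have := pointwise_upper h hq1 P Q
      rw [hQ, norm_sub_rev] at this
      exact this
    have s2 : KK φ' (1 + ‖Q‖) ‖P - Q‖ ≤ KK φ' (1 + ‖Q‖) t :=
      KK_mono h hσ (norm_nonneg _) hPQ
    have hCup0 : (0:ℝ) ≤ Cup := by rw [hCup]; positivity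
    have hClo0 : (0:ℝ) ≤ Clo := by rw [hClo]; positivity
    have h24 : (0:ℝ) < (2:ℝ)^(q-1)*4 := by
      have := Real.rpow_pos_of_pos (show (0:ℝ) < 2 by norm_num) (q-1); positivity
    have s3 : M * KK φ' (1 + ‖Q‖) t ≤ ((2:ℝ)^(q-1)*4) * (Clo * ∫ z, ‖V z - T‖^2 ∂μ) := by
      calc M * KK φ' (1 + ‖Q‖) t ≤ (2:ℝ)^(q-1)*4 * ∫ z, KK φ' (1 + ‖Q‖) (r z) ∂μ := hjen
      _ ≤ ((2:ℝ)^(q-1)*4) * (Clo * ∫ z, ‖V z - T‖^2 ∂μ) :=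
          mul_le_mul_of_nonneg_left hKint_le h24.le
    have s4 : KK φ' (1 + ‖Q‖) t ≤ M⁻¹ * (((2:ℝ)^(q-1)*4) * (Clo * ∫ z, ‖V z - T‖^2 ∂μ)) := by
      have h5 := mul_le_mul_of_nonneg_left s3 (inv_nonneg.mpr hM.le)
      rwa [← mul_assoc, inv_mul_cancel₀ (ne_of_gt hM), one_mul] at h5
    calc ‖T - Vfun φ' P‖^2 ≤ Cup * KK φ' (1 + ‖Q‖) ‖P - Q‖ := s1
    _ ≤ Cup * KK φ' (1 + ‖Q‖) t := mul_le_mul_of_nonneg_left s2 hCup0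
    _ ≤ Cup * (M⁻¹ * (((2:ℝ)^(q-1)*4) * (Clo * ∫ z, ‖V z - T‖^2 ∂μ))) :=
        mul_le_mul_of_nonneg_left s4 hCup0
    _ = (Cup * ((2:ℝ)^(q-1)*4) * Clo) * (M⁻¹ * ∫ z, ‖V z - T‖^2 ∂μ) := by ring
    _ = (Cup * ((2:ℝ)^(q-1)*4) * Clo) * ⨍ z, ‖V z - T‖^2 ∂μ := by
        rw [average_eq, smul_eq_mul, measureReal_def, ← hMdef]
  constructor
  · rw [avg_id (Vfun φ' P)]
    have : 0 ≤ ‖T - Vfun φ' P‖^2 := sq_nonneg _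
    linarith
  · rw [avg_id (Vfun φ' P)]
    have havg0 : 0 ≤ ⨍ z, ‖V z - T‖^2 ∂μ := by
      rw [average_eq]
      have : 0 ≤ ∫ z, ‖V z - T‖^2 ∂μ := integral_nonneg fun z => sq_nonneg _
      positivity
    nlinarith [key2]

end master


end VME

/-- For an N-function `φ` with index condition `p ≤ s·φ''(s)/φ'(s)+1 ≤ q` (`1 < p ≤ q`):
`⨍_U |V(g) − (V(g))_U|² ≤ ⨍_U |V(g) − V((g)_U)|² ≤ c·⨍_U |V(g) − (V(g))_U|²`
for every measurable `U` of positive finite measure and `g ∈ L¹(U)` with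
`⨍_U |V(g)|² < ∞`. -/
theorem V_mean_equivalence (m N n : ℕ) (p q : ℝ) (φ φ' φ'' : ℝ → ℝ)
    (hp : 1 < p) (hpq : p ≤ q) (h : IsNFun φ φ' φ'' p q) :
    ∃ c : ℝ, 1 ≤ c ∧ ∀ U : Set (EuclideanSpace ℝ (Fin m)), MeasurableSet U →
      0 < volume U → volume U < ⊤ →
      ∀ g : EuclideanSpace ℝ (Fin m) → EuclideanSpace ℝ (Fin N × Fin n),
        IntegrableOn g U →
        IntegrableOn (fun z => ‖Vfun φ' (g z)‖ ^ 2) U →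
        (⨍ z in U, ‖Vfun φ' (g z) - ⨍ w in U, Vfun φ' (g w)‖ ^ 2) ≤
            (⨍ z in U, ‖Vfun φ' (g z) - Vfun φ' (⨍ w in U, g w)‖ ^ 2) ∧
          (⨍ z in U, ‖Vfun φ' (g z) - Vfun φ' (⨍ w in U, g w)‖ ^ 2) ≤
            c * ⨍ z in U, ‖Vfun φ' (g z) - ⨍ w in U, Vfun φ' (g w)‖ ^ 2 := by
  have hp1 : 1 ≤ p := hp.le
  have hq1 : 1 ≤ q := (hp.trans_le hpq).le
  refine ⟨1 + 12*(q+2)^2 * ((2:ℝ)^(q-1)*4) * ((3:ℝ)^(q-1) * (((2:ℝ)^(q-1)*8)^2*4)),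
    ?_, ?_⟩
  · have h2 : (0:ℝ) < (2:ℝ)^(q-1) := Real.rpow_pos_of_pos (by norm_num) _
    have h3 : (0:ℝ) < (3:ℝ)^(q-1) := Real.rpow_pos_of_pos (by norm_num) _
    nlinarith [sq_nonneg (q+2), sq_nonneg ((2:ℝ)^(q-1)*8), mul_pos h2 h3,
      mul_pos (mul_pos h2 h3) (mul_pos h2 h2), sq_nonneg ((2:ℝ)^(q-1)),
      mul_nonneg (mul_nonneg (sq_nonneg (q+2)) h2.le) (mul_nonneg h3.le (mul_nonneg (sq_nonneg ((2:ℝ)^(q-1)*8)) (by norm_num : (0:ℝ) ≤ 4)))]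
  · intro U hU hU0 hUtop g hgi hV2
    haveI : IsFiniteMeasure (volume.restrict U) :=
      ⟨by rwa [Measure.restrict_apply_univ]⟩
    have hM : 0 < ((volume.restrict U) Set.univ).toReal := by
      rw [Measure.restrict_apply_univ]
      exact ENNReal.toReal_pos (ne_of_gt hU0) (ne_of_lt hUtop)
    exact VME.master h hp1 hq1 hM g hgi hV2
end

section
/- Let φ : [0,∞) → [0,∞) be an N-function of class C¹([0,∞)) ∩ C²((0,∞)) with φ(0) = 0, φ'(0) = 0, φ' increasing and positive on (0,∞), satisfying p ≤ s·φ''(s)/φ'(s) + 1 ≤ q for all s > 0, where 1 < p ≤ q. Let U ⊂ ℝ^m be measurable with 0 < |U| < ∞ and let w : U → ℝ^{N×n} be measurable with ∫_U φ(|w|) dz < ∞. Then there exists c = c(n,p,q) > 0 such that for every Q₀ ∈ ℝ^{N×n}: ⨍_U φ_{1+|(w)_U|}(|w − (w)_U|) dz ≤ c · ⨍_U φ_{1+|Q₀|}(|w − Q₀|) dz, where (w)_U := ⨍_U w dz and φ_σ denotes the shifted N-function of φ with shift σ. -/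
open MeasureTheory Real Set Filter
open scoped InnerProductSpace

/-- The integrand of the shifted N-function. -/
noncomputable def sker (φ' : ℝ → ℝ) (σ t : ℝ) : ℝ := φ' (σ + t) * t / (σ + t)

theorem shifted_eq (φ' : ℝ → ℝ) (σ s : ℝ) :
    shifted φ' σ s = ∫ t in (0:ℝ)..s, sker φ' σ t := rfl


theorem uIccSubsetIoi {a b : ℝ} (ha : -(1:ℝ)/2 < a) (hb : -(1:ℝ)/2 < b) :
    Set.uIcc a b ⊆ Set.Ioi (-(1:ℝ)/2) := by
  intro x hx
  rcases Set.mem_uIcc.mp hx with ⟨h1, _⟩ | ⟨h1, _⟩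
  · exact Set.mem_Ioi.mpr (lt_of_lt_of_le ha h1)
  · exact Set.mem_Ioi.mpr (lt_of_lt_of_le hb h1)

namespace IsNFun


variable {p q : ℝ} {φ φ' φ'' : ℝ → ℝ}

theorem deriv_nonneg (h : IsNFun φ φ' φ'' p q) {s : ℝ} (hs : 0 ≤ s) : 0 ≤ φ' s := by
  have := h.deriv_mono (show (0:ℝ) ∈ Ici 0 from Set.self_mem_Ici) (show s ∈ Ici 0 from hs) hs
  rwa [h.deriv_zero] at this

theorem deriv_doubling (h : IsNFun φ φ' φ'' p q) (hq1 : 1 ≤ q) {s t : ℝ}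
    (hs : 0 < s) (hst : s ≤ t) (ht2 : t ≤ 2 * s) : φ' t ≤ 2 ^ (q - 1) * φ' s := by
  have ht : 0 < t := lt_of_lt_of_le hs hst
  have hF : AntitoneOn (fun x : ℝ => φ' x * x ^ (1 - q)) (Ioi 0) := by
    have hderiv : ∀ x ∈ Ioi (0:ℝ), HasDerivAt (fun x : ℝ => φ' x * x ^ (1 - q))
        (φ'' x * x ^ (1 - q) + φ' x * ((1 - q) * x ^ (1 - q - 1))) x := by
      intro x hx
      have h1 : HasDerivAt φ' (φ'' x) x :=
        (h.hasDeriv2 x hx).hasDerivAt (Ioi_mem_nhds hx)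
      have h2 : HasDerivAt (fun x : ℝ => x ^ (1 - q)) ((1 - q) * x ^ (1 - q - 1)) x :=
        Real.hasDerivAt_rpow_const (Or.inl (ne_of_gt hx))
      exact h1.mul h2
    refine antitoneOn_of_deriv_nonpos (convex_Ioi 0) ?_ ?_ ?_
    · exact fun x hx => ((hderiv x hx).continuousAt).continuousWithinAt
    · intro x hx
      rw [interior_Ioi] at hx
      exact ((hderiv x hx).differentiableAt).differentiableWithinAt
    · intro x hx
      rw [interior_Ioi] at hx
      rw [(hderiv x hx).deriv]
      have hx0 : (0:ℝ) < x := hx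
      have hφ : 0 < φ' x := h.deriv_pos x hx0
      have hidx : x * φ'' x ≤ (q - 1) * φ' x := by
        have h1 := h.idx_high x hx0
        have h2 : x * φ'' x / φ' x ≤ q - 1 := by linarith
        exact (div_le_iff₀ hφ).mp h2 |>.trans_eq (by ring)
      have hxp : x ^ (1 - q) = x * x ^ (1 - q - 1) := by
        have e := Real.rpow_add hx0 1 (1 - q - 1)
        rw [Real.rpow_one, show (1 : ℝ) + (1 - q - 1) = 1 - q by ring] at e
        exact e
      have hpow : (0:ℝ) ≤ x ^ (1 - q - 1) := Real.rpow_nonneg hx0.le _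
      rw [hxp]
      have : φ'' x * (x * x ^ (1 - q - 1)) + φ' x * ((1 - q) * x ^ (1 - q - 1))
          = (x * φ'' x - (q - 1) * φ' x) * x ^ (1 - q - 1) := by ring
      rw [this]
      exact mul_nonpos_iff.mpr (Or.inr ⟨by linarith, hpow⟩)
  have hkey : φ' t * t ^ (1 - q) ≤ φ' s * s ^ (1 - q) :=
    hF (mem_Ioi.mpr hs) (mem_Ioi.mpr ht) hst
  have h1 : φ' t = φ' t * t ^ (1 - q) * t ^ (q - 1) := by
    rw [mul_assoc, ← Real.rpow_add ht, show (1 - q) + (q - 1) = 0 by ring, Real.rpow_zero,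
      mul_one]
  have htq : (0:ℝ) ≤ t ^ (q - 1) := Real.rpow_nonneg ht.le _
  have h2 : φ' t ≤ φ' s * s ^ (1 - q) * t ^ (q - 1) := by
    rw [h1]; exact mul_le_mul_of_nonneg_right hkey htq
  have h3 : t ^ (q - 1) ≤ 2 ^ (q - 1) * s ^ (q - 1) := by
    rw [← Real.mul_rpow (by norm_num) hs.le]
    exact Real.rpow_le_rpow ht.le ht2 (by linarith)
  have h4 : s ^ (1 - q) * s ^ (q - 1) = 1 := by
    rw [← Real.rpow_add hs, show (1 - q) + (q - 1) = 0 by ring, Real.rpow_zero]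
  have h5 : φ' s * s ^ (1 - q) * t ^ (q - 1) ≤ φ' s * s ^ (1 - q) * (2 ^ (q - 1) * s ^ (q - 1)) := by
    refine mul_le_mul_of_nonneg_left h3 ?_
    exact mul_nonneg (h.deriv_nonneg hs.le) (Real.rpow_nonneg hs.le _)
  have h6 : φ' s * s ^ (1 - q) * (2 ^ (q - 1) * s ^ (q - 1)) = 2 ^ (q - 1) * φ' s := by
    calc φ' s * s ^ (1 - q) * (2 ^ (q - 1) * s ^ (q - 1))
        = 2 ^ (q - 1) * φ' s * (s ^ (1 - q) * s ^ (q - 1)) := by ring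
      _ = 2 ^ (q - 1) * φ' s := by rw [h4, mul_one]
  linarith

theorem phi_sub_integral (h : IsNFun φ φ' φ'' p q) {u v : ℝ} (hu : 0 ≤ u) (huv : u ≤ v) :
    φ v - φ u = ∫ t in u..v, φ' t := by
  have hIcc : Icc u v ⊆ Ici 0 := fun y hy => hu.trans hy.1
  have hcontφ : ContinuousOn φ (Icc u v) := fun x hx =>
    ((h.hasDeriv x (hIcc hx)).continuousWithinAt).mono hIcc
  have hderiv : ∀ x ∈ Ioo u v, HasDerivWithinAt φ (φ' x) (Ioi x) x := fun x hx =>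
    (h.hasDeriv x (hu.trans hx.1.le)).mono (fun y hy => (hu.trans hx.1.le).trans (le_of_lt hy))
  have hint : IntervalIntegrable φ' volume u v :=
    (h.derivCont.mono hIcc).intervalIntegrable_of_Icc huv
  exact (intervalIntegral.integral_eq_sub_of_hasDeriv_right_of_le huv hcontφ hderiv hint).symm

theorem phi'_intervalIntegrable (h : IsNFun φ φ' φ'' p q) {u v : ℝ} (hu : 0 ≤ u) (huv : u ≤ v) :
    IntervalIntegrable φ' volume u v :=
  (h.derivCont.mono (fun y (hy : y ∈ Icc u v) => hu.trans hy.1)).intervalIntegrable_of_Icc huv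

theorem phi_mono (h : IsNFun φ φ' φ'' p q) : MonotoneOn φ (Ici 0) := by
  intro u hu v hv huv
  have h1 := h.phi_sub_integral (mem_Ici.mp hu) huv
  have h2 : 0 ≤ ∫ t in u..v, φ' t :=
    intervalIntegral.integral_nonneg huv (fun x hx => h.deriv_nonneg ((mem_Ici.mp hu).trans hx.1))
  linarith

theorem self_mul_deriv_le (h : IsNFun φ φ' φ'' p q) (hq1 : 1 ≤ q) {s : ℝ} (hs : 0 ≤ s) :
    s * φ' s ≤ 2 ^ q * φ s := by
  rcases eq_or_lt_of_le hs with rfl | hs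
  · simp [h.deriv_zero, h.map_zero]
  · have h2 : (0:ℝ) < s / 2 := by linarith
    have hsub : φ s - φ (s/2) = ∫ t in (s/2)..s, φ' t := h.phi_sub_integral h2.le (by linarith)
    have hlow : (s/2) * φ' (s/2) ≤ ∫ t in (s/2)..s, φ' t := by
      have hmono := intervalIntegral.integral_mono_on (μ := volume)
        (f := fun _ : ℝ => φ' (s/2)) (g := φ') (show s/2 ≤ s by linarith)
        intervalIntegrable_const (h.phi'_intervalIntegrable h2.le (by linarith))
        (fun x hx => h.deriv_mono (show s/2 ∈ Ici 0 from h2.le)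
          (show x ∈ Ici 0 from h2.le.trans hx.1) hx.1)
      have hc : ∫ _ in (s/2)..s, φ' (s/2) = (s - s/2) * φ' (s/2) := by
        simp [intervalIntegral.integral_const, smul_eq_mul]
      rw [hc] at hmono
      calc (s/2) * φ' (s/2) = (s - s/2) * φ' (s/2) := by ring
        _ ≤ _ := hmono
    have hd : φ' s ≤ 2 ^ (q-1) * φ' (s/2) :=
      h.deriv_doubling hq1 h2 (by linarith) (by linarith)
    have h2q : (2:ℝ) ^ q = 2 * 2 ^ (q-1) := by
      have e := Real.rpow_add (show (0:ℝ) < 2 by norm_num) 1 (q-1)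
      rw [Real.rpow_one, show (1 : ℝ) + (q - 1) = q by ring] at e
      exact e
    have hφhalf : 0 ≤ φ (s/2) := h.nonneg _ h2.le
    have hlow2 : (s/2) * φ' (s/2) ≤ φ s := by linarith
    have f1 : s * φ' s ≤ s * (2 ^ (q-1) * φ' (s/2)) :=
      mul_le_mul_of_nonneg_left hd hs.le
    have f2 : 2 ^ (q-1) * ((s/2) * φ' (s/2)) ≤ 2 ^ (q-1) * φ s :=
      mul_le_mul_of_nonneg_left hlow2 (Real.rpow_nonneg (by norm_num) _)
    rw [h2q]
    nlinarith [f1, f2]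

theorem phi_double (h : IsNFun φ φ' φ'' p q) (hq1 : 1 ≤ q) {s : ℝ} (hs : 0 ≤ s) :
    φ (2 * s) ≤ 2 ^ (2 * q) * φ s := by
  rcases eq_or_lt_of_le hs with rfl | hs
  · simp [h.map_zero, h.nonneg]
  · have hsub : φ (2*s) - φ s = ∫ t in s..(2*s), φ' t :=
      h.phi_sub_integral hs.le (by linarith)
    have hup : (∫ t in s..(2*s), φ' t) ≤ (2*s - s) * φ' (2*s) := by
      have hmono := intervalIntegral.integral_mono_on (μ := volume)
        (f := φ') (g := fun _ : ℝ => φ' (2*s)) (show s ≤ 2*s by linarith)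
        (h.phi'_intervalIntegrable hs.le (by linarith)) intervalIntegrable_const
        (fun x hx => h.deriv_mono (show x ∈ Ici 0 from hs.le.trans hx.1)
          (show 2*s ∈ Ici 0 by simp; linarith) hx.2)
      simpa [intervalIntegral.integral_const, smul_eq_mul] using hmono
    have hd : φ' (2*s) ≤ 2 ^ (q-1) * φ' s :=
      h.deriv_doubling hq1 hs (by linarith) (by linarith)
    have hC0 : s * φ' s ≤ 2 ^ q * φ s := h.self_mul_deriv_le hq1 hs.le
    have h2q : (2:ℝ) ^ (2*q) = 2 ^ (q-1) * 2 ^ q * 2 := by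
      have e1 := Real.rpow_add (show (0:ℝ) < 2 by norm_num) (q-1) q
      have e2 := Real.rpow_add (show (0:ℝ) < 2 by norm_num) (q-1+q) 1
      rw [Real.rpow_one] at e2
      rw [show 2*q = q-1+q+1 by ring, e2, e1]
    have hone : (1:ℝ) ≤ 2 ^ (q-1) * 2 ^ q := by
      rw [← Real.rpow_add (by norm_num : (0:ℝ) < 2)]
      calc (1:ℝ) = 2 ^ (0:ℝ) := by rw [Real.rpow_zero]
        _ ≤ 2 ^ (q - 1 + q) := by
            exact (Real.rpow_le_rpow_left_iff (by norm_num : (1:ℝ) < 2)).mpr (by linarith)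
    have hφs : 0 ≤ φ s := h.nonneg _ hs.le
    have f1 : s * φ' (2*s) ≤ s * (2 ^ (q-1) * φ' s) := mul_le_mul_of_nonneg_left hd hs.le
    have f2 : 2 ^ (q-1) * (s * φ' s) ≤ 2 ^ (q-1) * (2 ^ q * φ s) :=
      mul_le_mul_of_nonneg_left hC0 (Real.rpow_nonneg (by norm_num) _)
    have hint2 : (0:ℝ) ≤ (2 ^ (q-1) * 2 ^ q - 1) * φ s :=
      mul_nonneg (by linarith) hφs
    rw [h2q]
    nlinarith [f1, f2, hint2]

theorem le_one_add (h : IsNFun φ φ' φ'' p q) {s : ℝ} (hs : 0 ≤ s) :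
    s ≤ 1 + φ s / φ' 1 := by
  have hφ1 : 0 < φ' 1 := h.deriv_pos 1 one_pos
  rcases le_total s 1 with hs1 | hs1
  · have : 0 ≤ φ s / φ' 1 := div_nonneg (h.nonneg s hs) hφ1.le
    linarith
  · have hsub : φ s - φ 1 = ∫ t in (1:ℝ)..s, φ' t := h.phi_sub_integral (by norm_num) hs1
    have hlow : (s - 1) * φ' 1 ≤ ∫ t in (1:ℝ)..s, φ' t := by
      have hmono := intervalIntegral.integral_mono_on (μ := volume)
        (f := fun _ : ℝ => φ' 1) (g := φ') hs1
        intervalIntegrable_const (h.phi'_intervalIntegrable (by norm_num) hs1)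
        (fun x hx => h.deriv_mono (show (1:ℝ) ∈ Ici 0 by norm_num)
          (show x ∈ Ici 0 by simp; linarith [hx.1]) hx.1)
      simpa [intervalIntegral.integral_const, smul_eq_mul] using hmono
    have hφ1' : 0 ≤ φ 1 := h.nonneg 1 (by norm_num)
    have : (s - 1) * φ' 1 ≤ φ s := by linarith
    have hdiv : s - 1 ≤ φ s / φ' 1 := (le_div_iff₀ hφ1).mpr this
    linarith

theorem sker_nonneg (h : IsNFun φ φ' φ'' p q) {σ t : ℝ} (hσ : 1 ≤ σ) (ht : 0 ≤ t) :
    0 ≤ sker φ' σ t :=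
  div_nonneg (mul_nonneg (h.deriv_nonneg (by linarith)) ht) (by linarith)

theorem sker_mono (h : IsNFun φ φ' φ'' p q) {σ : ℝ} (hσ : 1 ≤ σ) {u v : ℝ}
    (hu : 0 ≤ u) (huv : u ≤ v) : sker φ' σ u ≤ sker φ' σ v := by
  have hσu : (0:ℝ) < σ + u := by linarith
  have hσv : (0:ℝ) < σ + v := by linarith
  have hA : 0 ≤ φ' (σ + u) := h.deriv_nonneg (by linarith)
  have hmono : φ' (σ + u) ≤ φ' (σ + v) :=
    h.deriv_mono (show σ + u ∈ Ici 0 by simp; linarith) (show σ + v ∈ Ici 0 by simp; linarith)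
      (by linarith)
  unfold sker
  rw [div_le_div_iff₀ hσu hσv]
  nlinarith [mul_le_mul_of_nonneg_right hmono (mul_nonneg (hu.trans huv) hσu.le),
    mul_le_mul_of_nonneg_left (show u * (σ + v) ≤ v * (σ + u) by nlinarith) hA]

theorem sker_contOn (h : IsNFun φ φ' φ'' p q) {σ : ℝ} (hσ : 1 ≤ σ) :
    ContinuousOn (sker φ' σ) (Ioi (-(1:ℝ)/2)) := by
  intro t ht
  have ht' : -(1:ℝ)/2 < t := mem_Ioi.mp ht
  have hσt : (0:ℝ) < σ + t := by linarith
  have c1 : ContinuousAt (fun u : ℝ => φ' (σ + u)) t :=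
    (h.derivCont.continuousAt (Ici_mem_nhds hσt)).comp
      ((continuous_const.add continuous_id).continuousAt)
  have c2 : ContinuousAt (fun u : ℝ => σ + u) t :=
    (continuous_const.add continuous_id).continuousAt
  exact (((c1.mul continuousAt_id).div c2 hσt.ne').continuousWithinAt)

theorem sker_intInt (h : IsNFun φ φ' φ'' p q) {σ a b : ℝ} (hσ : 1 ≤ σ)
    (ha : 0 ≤ a) (hb : 0 ≤ b) : IntervalIntegrable (sker φ' σ) volume a b :=
  ((h.sker_contOn hσ).mono (uIccSubsetIoi (by linarith) (by linarith))).intervalIntegrable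

theorem shifted_hasDerivAt (h : IsNFun φ φ' φ'' p q) {σ s : ℝ} (hσ : 1 ≤ σ)
    (hs : -(1:ℝ)/2 < s) : HasDerivAt (shifted φ' σ) (sker φ' σ s) s := by
  have hInt : IntervalIntegrable (sker φ' σ) volume 0 s :=
    ((h.sker_contOn hσ).mono (uIccSubsetIoi (by norm_num) hs)).intervalIntegrable
  have hmeas : StronglyMeasurableAtFilter (sker φ' σ) (nhds s) volume :=
    ((h.sker_contOn hσ).stronglyMeasurableAtFilter isOpen_Ioi) s (mem_Ioi.mpr hs)
  have hcont : ContinuousAt (sker φ' σ) s :=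
    (h.sker_contOn hσ).continuousAt (isOpen_Ioi.mem_nhds (mem_Ioi.mpr hs))
  exact intervalIntegral.integral_hasDerivAt_right hInt hmeas hcont

theorem shifted_contOn (h : IsNFun φ φ' φ'' p q) {σ : ℝ} (hσ : 1 ≤ σ) :
    ContinuousOn (shifted φ' σ) (Ici 0) := fun s hs =>
  ((h.shifted_hasDerivAt hσ
    (lt_of_lt_of_le (by norm_num) (mem_Ici.mp hs))).continuousAt).continuousWithinAt

theorem shifted_convexOn (h : IsNFun φ φ' φ'' p q) {σ : ℝ} (hσ : 1 ≤ σ) :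
    ConvexOn ℝ (Ici 0) (shifted φ' σ) := by
  refine MonotoneOn.convexOn_of_deriv (convex_Ici 0) (h.shifted_contOn hσ) ?_ ?_
  · rw [interior_Ici]
    intro s hs
    exact ((h.shifted_hasDerivAt hσ
      (by linarith [mem_Ioi.mp hs])).differentiableAt).differentiableWithinAt
  · rw [interior_Ici]
    intro u hu v hv huv
    rw [(h.shifted_hasDerivAt hσ (by linarith [mem_Ioi.mp hu])).deriv,
      (h.shifted_hasDerivAt hσ (by linarith [mem_Ioi.mp hv])).deriv]
    exact h.sker_mono hσ (le_of_lt (mem_Ioi.mp hu)) huv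

theorem shifted_nonneg (h : IsNFun φ φ' φ'' p q) {σ s : ℝ} (hσ : 1 ≤ σ) (hs : 0 ≤ s) :
    0 ≤ shifted φ' σ s := by
  rw [shifted_eq]
  exact intervalIntegral.integral_nonneg hs (fun u hu => h.sker_nonneg hσ hu.1)

theorem shifted_mono (h : IsNFun φ φ' φ'' p q) {σ s t : ℝ} (hσ : 1 ≤ σ)
    (hs : 0 ≤ s) (hst : s ≤ t) : shifted φ' σ s ≤ shifted φ' σ t := by
  have ht : 0 ≤ t := hs.trans hst
  have hadj := intervalIntegral.integral_add_adjacent_intervals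
    (h.sker_intInt hσ le_rfl hs) (h.sker_intInt hσ hs ht)
  have hnn : 0 ≤ ∫ u in s..t, sker φ' σ u :=
    intervalIntegral.integral_nonneg hst (fun u hu => h.sker_nonneg hσ (hs.trans hu.1))
  rw [shifted_eq, shifted_eq, ← hadj]
  linarith

theorem shifted_le_self_sker (h : IsNFun φ φ' φ'' p q) {σ s : ℝ} (hσ : 1 ≤ σ) (hs : 0 ≤ s) :
    shifted φ' σ s ≤ s * sker φ' σ s := by
  rw [shifted_eq]
  have hmono := intervalIntegral.integral_mono_on (μ := volume)
    (f := sker φ' σ) (g := fun _ : ℝ => sker φ' σ s) hs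
    (h.sker_intInt hσ le_rfl hs) intervalIntegrable_const
    (fun x hx => h.sker_mono hσ hx.1 hx.2)
  simpa [intervalIntegral.integral_const, smul_eq_mul, sub_zero] using hmono

theorem sker_double (h : IsNFun φ φ' φ'' p q) (hq1 : 1 ≤ q) {σ s : ℝ} (hσ : 1 ≤ σ)
    (hs : 0 ≤ s) : sker φ' σ (2 * s) ≤ 2 ^ q * sker φ' σ s := by
  have hσs : (0:ℝ) < σ + s := by linarith
  have hσ2s : (0:ℝ) < σ + 2 * s := by linarith
  have hd : φ' (σ + 2 * s) ≤ 2 ^ (q - 1) * φ' (σ + s) :=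
    h.deriv_doubling hq1 hσs (by linarith) (by linarith)
  have hq2 : (2:ℝ) ^ q = 2 * 2 ^ (q - 1) := by
    have e := Real.rpow_add (show (0:ℝ) < 2 by norm_num) 1 (q - 1)
    rw [Real.rpow_one, show (1 : ℝ) + (q - 1) = q by ring] at e
    exact e
  have hA : 0 ≤ φ' (σ + s) := h.deriv_nonneg (by linarith)
  have hA2 : 0 ≤ φ' (σ + 2 * s) := h.deriv_nonneg (by linarith)
  have hrp : (0:ℝ) ≤ 2 ^ (q - 1) := Real.rpow_nonneg (by norm_num) _
  unfold sker
  rw [← mul_div_assoc, div_le_div_iff₀ hσ2s hσs, hq2]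
  have u1 : φ' (σ + 2*s) * (2*s) ≤ (2 ^ (q-1) * φ' (σ+s)) * (2*s) :=
    mul_le_mul_of_nonneg_right hd (by linarith)
  have u2 : φ' (σ + 2*s) * (2*s) * (σ+s) ≤ (2 ^ (q-1) * φ' (σ+s)) * (2*s) * (σ+s) :=
    mul_le_mul_of_nonneg_right u1 hσs.le
  have u3 : (2 ^ (q-1) * φ' (σ+s)) * (2*s) * (σ+s)
      ≤ (2 ^ (q-1) * φ' (σ+s)) * (2*s) * (σ+2*s) := by
    have hc : (0:ℝ) ≤ (2 ^ (q-1) * φ' (σ+s)) * (2*s) :=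
      mul_nonneg (mul_nonneg hrp hA) (by linarith)
    exact mul_le_mul_of_nonneg_left (show σ+s ≤ σ+2*s by linarith) hc
  linarith [u2, u3]

theorem sker_shift (h : IsNFun φ φ' φ'' p q) (hq1 : 1 ≤ q) {a b d y : ℝ}
    (ha : 1 ≤ a) (hb : 1 ≤ b) (hd : 0 ≤ d) (hab : a ≤ b + d) (hba : b ≤ a + d)
    (hdy : d ≤ y) (hy : 0 ≤ y) : sker φ' a y ≤ 2 ^ (q + 1) * sker φ' b y := by
  have hay : (0:ℝ) < a + y := by linarith
  have hby : (0:ℝ) < b + y := by linarith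
  have hm1 : φ' (a + y) ≤ φ' (b + 2 * y) :=
    h.deriv_mono (show a + y ∈ Ici 0 by simp; linarith) (show b + 2*y ∈ Ici 0 by simp; linarith)
      (by linarith)
  have hm2 : φ' (b + 2 * y) ≤ 2 ^ (q - 1) * φ' (b + y) := by
    have := h.deriv_doubling hq1 (show (0:ℝ) < b + y by linarith)
      (show b + y ≤ b + 2 * y by linarith) (show b + 2 * y ≤ 2 * (b + y) by linarith)
    calc φ' (b + 2 * y) = φ' (b + y + y) := by ring_nf
      _ ≤ 2 ^ (q - 1) * φ' (b + y) := by
          have e : b + 2 * y = b + y + y := by ring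
          rw [← e]; exact this
  have hq2 : (2:ℝ) ^ (q + 1) = 2 ^ (q - 1) * 4 := by
    have e := Real.rpow_add (show (0:ℝ) < 2 by norm_num) (q - 1) 2
    rw [show ((2:ℝ) ^ (2:ℝ)) = 4 by
        rw [show (2:ℝ) = ((2:ℕ):ℝ) by norm_num, Real.rpow_natCast]; norm_num] at e
    rw [show (q - 1) + 2 = q + 1 by ring] at e
    exact e
  have hbylt : b + y ≤ 3 * (a + y) := by linarith
  have hφby : 0 ≤ φ' (b + y) := h.deriv_nonneg (by linarith)
  have hφay : 0 ≤ φ' (a + y) := h.deriv_nonneg (by linarith)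
  have hkey : φ' (a + y) ≤ 2 ^ (q - 1) * φ' (b + y) := le_trans hm1 hm2
  have hrp : (0:ℝ) ≤ 2 ^ (q - 1) := Real.rpow_nonneg (by norm_num) _
  unfold sker
  rw [← mul_div_assoc, div_le_div_iff₀ hay hby, hq2]
  have v1 : φ' (a+y) * y ≤ (2 ^ (q-1) * φ' (b+y)) * y :=
    mul_le_mul_of_nonneg_right hkey hy
  have v2 : φ' (a+y) * y * (b+y) ≤ (2 ^ (q-1) * φ' (b+y)) * y * (b+y) :=
    mul_le_mul_of_nonneg_right v1 hby.le
  have v3 : (2 ^ (q-1) * φ' (b+y)) * y * (b+y)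
      ≤ (2 ^ (q-1) * φ' (b+y)) * y * (3*(a+y)) := by
    have hc : (0:ℝ) ≤ (2 ^ (q-1) * φ' (b+y)) * y := mul_nonneg (mul_nonneg hrp hφby) hy
    exact mul_le_mul_of_nonneg_left hbylt hc
  have v4 : (0:ℝ) ≤ (2 ^ (q-1) * φ' (b+y)) * y * (a+y) :=
    mul_nonneg (mul_nonneg (mul_nonneg hrp hφby) hy) hay.le
  linarith [v2, v3, v4]

theorem self_sker_le_shifted (h : IsNFun φ φ' φ'' p q) (hq1 : 1 ≤ q) {σ s : ℝ}
    (hσ : 1 ≤ σ) (hs : 0 ≤ s) : s * sker φ' σ s ≤ 2 ^ (q + 1) * shifted φ' σ s := by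
  have h2 : (0:ℝ) ≤ s / 2 := by linarith
  have hadj := intervalIntegral.integral_add_adjacent_intervals
    (h.sker_intInt hσ le_rfl h2) (h.sker_intInt hσ h2 hs)
  have hnn : 0 ≤ ∫ u in (0:ℝ)..(s/2), sker φ' σ u :=
    intervalIntegral.integral_nonneg h2 (fun u hu => h.sker_nonneg hσ hu.1)
  have hlow : (s/2) * sker φ' σ (s/2) ≤ ∫ u in (s/2)..s, sker φ' σ u := by
    have hmono := intervalIntegral.integral_mono_on (μ := volume)
      (f := fun _ : ℝ => sker φ' σ (s/2)) (g := sker φ' σ) (show s/2 ≤ s by linarith)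
      intervalIntegrable_const (h.sker_intInt hσ h2 hs)
      (fun x hx => h.sker_mono hσ h2 hx.1)
    have hc : ∫ _ in (s/2)..s, sker φ' σ (s/2) = (s - s/2) * sker φ' σ (s/2) := by
      simp [intervalIntegral.integral_const, smul_eq_mul]
    rw [hc] at hmono
    calc (s/2) * sker φ' σ (s/2) = (s - s/2) * sker φ' σ (s/2) := by ring
      _ ≤ _ := hmono
  have hshift : (s/2) * sker φ' σ (s/2) ≤ shifted φ' σ s := by
    rw [shifted_eq, ← hadj]; linarith
  have hdb : sker φ' σ s ≤ 2 ^ q * sker φ' σ (s/2) := by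
    have := h.sker_double hq1 hσ h2
    rw [show 2 * (s/2) = s by ring] at this
    exact this
  have hq2 : (2:ℝ) ^ (q + 1) = 2 * 2 ^ q := by
    have e := Real.rpow_add (show (0:ℝ) < 2 by norm_num) 1 q
    rw [Real.rpow_one, show (1 : ℝ) + q = q + 1 by ring] at e
    exact e
  have f1 : s * sker φ' σ s ≤ s * (2 ^ q * sker φ' σ (s/2)) :=
    mul_le_mul_of_nonneg_left hdb hs
  have f2 : (2 * 2 ^ q) * ((s/2) * sker φ' σ (s/2)) ≤ (2 * 2 ^ q) * shifted φ' σ s :=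
    mul_le_mul_of_nonneg_left hshift
      (by positivity)
  rw [hq2]
  nlinarith [f1, f2]

theorem key_pointwise (h : IsNFun φ φ' φ'' p q) (hq1 : 1 ≤ q) {a b d x r : ℝ}
    (ha : 1 ≤ a) (hb : 1 ≤ b) (hd : |a - b| ≤ d) (hx : 0 ≤ x) (hr : 0 ≤ r)
    (hrx : r ≤ x + d) :
    shifted φ' a r ≤ 2 ^ (3 * q + 3) * (shifted φ' b x + shifted φ' b d) := by
  have hd0 : 0 ≤ d := le_trans (abs_nonneg _) hd
  obtain ⟨hab', hba'⟩ := abs_le.mp hd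
  have hab : a ≤ b + d := by linarith
  have hba : b ≤ a + d := by linarith
  set M := max x d with hM
  have hxM : x ≤ M := le_max_left x d
  have hdM : d ≤ M := le_max_right x d
  have hM0 : 0 ≤ M := le_trans hx hxM
  have hr2M : r ≤ 2 * M := by linarith
  have c1 : shifted φ' a r ≤ r * sker φ' a r := h.shifted_le_self_sker ha hr
  have c2 : r * sker φ' a r ≤ (2 * M) * sker φ' a (2 * M) :=
    mul_le_mul hr2M (h.sker_mono ha hr hr2M) (h.sker_nonneg ha hr) (by linarith)
  have c3 : sker φ' a (2 * M) ≤ 2 ^ q * sker φ' a M := h.sker_double hq1 ha hM0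
  have c4 : sker φ' a M ≤ 2 ^ (q + 1) * sker φ' b M :=
    h.sker_shift hq1 ha hb hd0 hab hba hdM hM0
  have c5 : M * sker φ' b M ≤ x * sker φ' b x + d * sker φ' b d := by
    rcases max_choice x d with hc | hc
    · rw [hM, hc]
      exact le_add_of_nonneg_right (mul_nonneg hd0 (h.sker_nonneg hb hd0))
    · rw [hM, hc]
      exact le_add_of_nonneg_left (mul_nonneg hx (h.sker_nonneg hb hx))
  have c6 : x * sker φ' b x ≤ 2 ^ (q + 1) * shifted φ' b x :=
    h.self_sker_le_shifted hq1 hb hx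
  have c7 : d * sker φ' b d ≤ 2 ^ (q + 1) * shifted φ' b d :=
    h.self_sker_le_shifted hq1 hb hd0
  have hq2 : (2:ℝ) ^ q = 2 * 2 ^ (q - 1) := by
    have e := Real.rpow_add (show (0:ℝ) < 2 by norm_num) 1 (q - 1)
    rw [Real.rpow_one, show (1 : ℝ) + (q - 1) = q by ring] at e
    exact e
  have hA1 : (0:ℝ) < 2 ^ (q + 1) := Real.rpow_pos_of_pos (by norm_num) _
  have hAq : (0:ℝ) < 2 ^ q := Real.rpow_pos_of_pos (by norm_num) _
  have e1 : (2:ℝ) * 2 ^ q = 2 ^ (q + 1) := by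
    have e := Real.rpow_add (show (0:ℝ) < 2 by norm_num) 1 q
    rw [Real.rpow_one, show (1 : ℝ) + q = q + 1 by ring] at e
    exact e.symm
  have e2 : (2:ℝ) ^ (q + 1) * 2 ^ (q + 1) * 2 ^ (q + 1) = 2 ^ (3 * q + 3) := by
    rw [← Real.rpow_add (show (0:ℝ) < 2 by norm_num),
      ← Real.rpow_add (show (0:ℝ) < 2 by norm_num), show q + 1 + (q + 1) + (q + 1) = 3 * q + 3
        by ring]
  have step1 : shifted φ' a r ≤ 2 ^ (q + 1) * (M * sker φ' a M) := by
    have : (2 * M) * sker φ' a (2 * M) ≤ (2 * M) * (2 ^ q * sker φ' a M) :=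
      mul_le_mul_of_nonneg_left c3 (by linarith)
    calc shifted φ' a r ≤ (2 * M) * sker φ' a (2 * M) := c1.trans c2
      _ ≤ (2 * M) * (2 ^ q * sker φ' a M) := this
      _ = (2 * 2 ^ q) * (M * sker φ' a M) := by ring
      _ = 2 ^ (q + 1) * (M * sker φ' a M) := by rw [e1]
  have step2 : M * sker φ' a M ≤ 2 ^ (q + 1) * (M * sker φ' b M) := by
    calc M * sker φ' a M ≤ M * (2 ^ (q + 1) * sker φ' b M) :=
          mul_le_mul_of_nonneg_left c4 hM0
      _ = 2 ^ (q + 1) * (M * sker φ' b M) := by ring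
  have step3 : M * sker φ' b M ≤ 2 ^ (q + 1) * (shifted φ' b x + shifted φ' b d) := by
    calc M * sker φ' b M ≤ x * sker φ' b x + d * sker φ' b d := c5
      _ ≤ 2 ^ (q + 1) * shifted φ' b x + 2 ^ (q + 1) * shifted φ' b d := add_le_add c6 c7
      _ = 2 ^ (q + 1) * (shifted φ' b x + shifted φ' b d) := by ring
  calc shifted φ' a r ≤ 2 ^ (q + 1) * (M * sker φ' a M) := step1
    _ ≤ 2 ^ (q + 1) * (2 ^ (q + 1) * (M * sker φ' b M)) :=
        mul_le_mul_of_nonneg_left step2 hA1.le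
    _ ≤ 2 ^ (q + 1) * (2 ^ (q + 1) * (2 ^ (q + 1) * (shifted φ' b x + shifted φ' b d))) := by
        refine mul_le_mul_of_nonneg_left (mul_le_mul_of_nonneg_left step3 hA1.le) hA1.le
    _ = (2 ^ (q + 1) * 2 ^ (q + 1) * 2 ^ (q + 1)) * (shifted φ' b x + shifted φ' b d) := by
        ring
    _ = 2 ^ (3 * q + 3) * (shifted φ' b x + shifted φ' b d) := by rw [e2]

theorem shifted_dominated (h : IsNFun φ φ' φ'' p q) (hq1 : 1 ≤ q) {b t : ℝ}
    (hb : 1 ≤ b) (ht : 0 ≤ t) : shifted φ' b t ≤ 2 ^ (3 * q) * (φ b + φ t) := by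
  have hbt : (0:ℝ) < b + t := by linarith
  have hφbt : 0 ≤ φ' (b + t) := h.deriv_nonneg (by linarith)
  have c1 : shifted φ' b t ≤ t * sker φ' b t := h.shifted_le_self_sker hb ht
  have c2 : t * sker φ' b t ≤ φ' (b + t) * (b + t) := by
    have hfrac : sker φ' b t ≤ φ' (b + t) := by
      unfold sker
      rw [div_le_iff₀ hbt]
      nlinarith
    calc t * sker φ' b t ≤ t * φ' (b + t) := mul_le_mul_of_nonneg_left hfrac ht
      _ ≤ (b + t) * φ' (b + t) := mul_le_mul_of_nonneg_right (by linarith) hφbt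
      _ = φ' (b + t) * (b + t) := by ring
  have c3 : φ' (b + t) * (b + t) ≤ 2 ^ q * φ (b + t) := by
    have := h.self_mul_deriv_le hq1 hbt.le
    linarith [this]
  set M := max b t with hMdef
  have hbM : b ≤ M := le_max_left b t
  have htM : t ≤ M := le_max_right b t
  have hM0 : (0:ℝ) ≤ M := ht.trans htM
  have c4 : φ (b + t) ≤ φ (2 * M) :=
    h.phi_mono (show b + t ∈ Ici 0 by simp; linarith) (show 2 * M ∈ Ici 0 by simp; linarith)
      (by linarith)
  have c5 : φ (2 * M) ≤ 2 ^ (2 * q) * φ M := h.phi_double hq1 hM0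
  have c6 : φ M ≤ φ b + φ t := by
    rcases max_choice b t with hc | hc
    · rw [hMdef, hc]; exact le_add_of_nonneg_right (h.nonneg t ht)
    · rw [hMdef, hc]; exact le_add_of_nonneg_left (h.nonneg b (by linarith))
  have e3 : (2:ℝ) ^ q * 2 ^ (2 * q) = 2 ^ (3 * q) := by
    rw [← Real.rpow_add (show (0:ℝ) < 2 by norm_num), show q + 2 * q = 3 * q by ring]
  have hAq : (0:ℝ) ≤ 2 ^ q := Real.rpow_nonneg (by norm_num) _
  have hA2q : (0:ℝ) ≤ 2 ^ (2 * q) := Real.rpow_nonneg (by norm_num) _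
  calc shifted φ' b t ≤ φ' (b + t) * (b + t) := c1.trans c2
    _ ≤ 2 ^ q * φ (b + t) := c3
    _ ≤ 2 ^ q * (2 ^ (2 * q) * φ M) :=
        mul_le_mul_of_nonneg_left (c4.trans c5) hAq
    _ = (2 ^ q * 2 ^ (2 * q)) * φ M := by ring
    _ ≤ (2 ^ q * 2 ^ (2 * q)) * (φ b + φ t) :=
        mul_le_mul_of_nonneg_left c6 (mul_nonneg hAq hA2q)
    _ = 2 ^ (3 * q) * (φ b + φ t) := by rw [e3]

theorem phi_add_bound (h : IsNFun φ φ' φ'' p q) (hq1 : 1 ≤ q) {u v : ℝ}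
    (hu : 0 ≤ u) (hv : 0 ≤ v) : φ (u + v) ≤ 2 ^ (2 * q) * (φ u + φ v) := by
  set M := max u v with hMdef
  have hM0 : 0 ≤ M := hu.trans (le_max_left u v)
  have c1 : φ (u + v) ≤ φ (2 * M) :=
    h.phi_mono (show u + v ∈ Ici 0 by simp; linarith)
      (show 2 * M ∈ Ici 0 by simp; linarith)
      (by simp only [hMdef]; cases le_total u v with
        | inl h' => rw [max_eq_right h']; linarith
        | inr h' => rw [max_eq_left h']; linarith)
  have c2 : φ (2 * M) ≤ 2 ^ (2 * q) * φ M := h.phi_double hq1 hM0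
  have c3 : φ M ≤ φ u + φ v := by
    rcases max_choice u v with hc | hc
    · rw [hMdef, hc]; exact le_add_of_nonneg_right (h.nonneg v hv)
    · rw [hMdef, hc]; exact le_add_of_nonneg_left (h.nonneg u hu)
  have hA : (0:ℝ) ≤ 2 ^ (2 * q) := Real.rpow_nonneg (by norm_num) _
  calc φ (u + v) ≤ 2 ^ (2 * q) * φ M := c1.trans c2
    _ ≤ 2 ^ (2 * q) * (φ u + φ v) := mul_le_mul_of_nonneg_left c3 hA

end IsNFun


/-- **Almost minimality of the mean for shifted N-functions.** For an N-function `φ`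
with index condition (`1 < p ≤ q`) and `w` measurable with `∫_U φ(|w|) dz < ∞`,
`⨍_U φ_{1+|(w)_U|}(|w − (w)_U|) ≤ c ⨍_U φ_{1+|Q₀|}(|w − Q₀|)` for every `Q₀`. -/
theorem shifted_mean_almost_minimality (m N n : ℕ) (p q : ℝ) (φ φ' φ'' : ℝ → ℝ)
    (hp : 1 < p) (hpq : p ≤ q) (h : IsNFun φ φ' φ'' p q) :
    ∃ c : ℝ, 0 < c ∧ ∀ U : Set (EuclideanSpace ℝ (Fin m)), MeasurableSet U →
      0 < volume U → volume U < ⊤ →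
      ∀ w : EuclideanSpace ℝ (Fin m) → EuclideanSpace ℝ (Fin N × Fin n),
        AEStronglyMeasurable w (volume.restrict U) →
        IntegrableOn (fun z => φ ‖w z‖) U →
        ∀ Q₀ : EuclideanSpace ℝ (Fin N × Fin n),
          (⨍ z in U, shifted φ' (1 + ‖⨍ y in U, w y‖) ‖w z - ⨍ y in U, w y‖)
            ≤ c * ⨍ z in U, shifted φ' (1 + ‖Q₀‖) ‖w z - Q₀‖ := by
  have hq1 : 1 ≤ q := le_trans hp.le hpq
  have h2pos : (0:ℝ) < 2 ^ (3 * q + 3) := Real.rpow_pos_of_pos (by norm_num) _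
  refine ⟨2 * 2 ^ (3 * q + 3), by positivity, ?_⟩
  intro U hU hU0 hUtop w hw hint Q₀
  haveI : IsFiniteMeasure (volume.restrict U) := ⟨by rwa [Measure.restrict_apply_univ]⟩
  haveI : NeZero (volume.restrict U) :=
    ⟨by rw [Ne, Measure.restrict_eq_zero]; exact hU0.ne'⟩
  have hcU0 : 0 < (volume U).toReal := ENNReal.toReal_pos hU0.ne' hUtop.ne
  have hφ1 : 0 < φ' 1 := h.deriv_pos 1 one_pos
  have hwint : Integrable w (volume.restrict U) := by
    refine Integrable.mono' ((integrable_const (1:ℝ)).add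
      (Integrable.const_mul hint ((φ' 1)⁻¹))) hw ?_
    refine Filter.Eventually.of_forall (fun z => ?_)
    have h3 := h.le_one_add (norm_nonneg (w z))
    rw [div_eq_inv_mul] at h3
    exact h3
  set W : EuclideanSpace ℝ (Fin N × Fin n) := ⨍ y in U, w y with hWdef
  have haW : 1 ≤ 1 + ‖W‖ := by linarith [norm_nonneg W]
  have hbQ : 1 ≤ 1 + ‖Q₀‖ := by linarith [norm_nonneg Q₀]
  have habd : |(1 + ‖W‖) - (1 + ‖Q₀‖)| ≤ ‖W - Q₀‖ := by
    rw [show (1 + ‖W‖) - (1 + ‖Q₀‖) = ‖W‖ - ‖Q₀‖ by ring]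
    exact abs_norm_sub_norm_le W Q₀
  have hmeascomp : ∀ σ : ℝ, 1 ≤ σ → ∀ v : EuclideanSpace ℝ (Fin N × Fin n),
      AEStronglyMeasurable (fun z => shifted φ' σ ‖w z - v‖) (volume.restrict U) := by
    intro σ hσ v
    have hcont : Continuous (fun s : ℝ => shifted φ' σ |s|) :=
      (h.shifted_contOn hσ).comp_continuous continuous_abs (fun x => abs_nonneg x)
    have h1 : AEStronglyMeasurable (fun z => ‖w z - v‖) (volume.restrict U) :=
      (hw.sub (aestronglyMeasurable_const (b := v))).norm
    have := hcont.comp_aestronglyMeasurable h1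
    simpa only [Function.comp, abs_norm] using this
  have hpt : ∀ z, shifted φ' (1 + ‖W‖) ‖w z - W‖ ≤
      2 ^ (3 * q + 3) * (shifted φ' (1 + ‖Q₀‖) ‖w z - Q₀‖
        + shifted φ' (1 + ‖Q₀‖) ‖W - Q₀‖) := by
    intro z
    refine h.key_pointwise hq1 haW hbQ habd (norm_nonneg _) (norm_nonneg _) ?_
    calc ‖w z - W‖ = ‖(w z - Q₀) + (Q₀ - W)‖ := by rw [sub_add_sub_cancel]
      _ ≤ ‖w z - Q₀‖ + ‖Q₀ - W‖ := norm_add_le _ _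
      _ = ‖w z - Q₀‖ + ‖W - Q₀‖ := by rw [norm_sub_rev Q₀ W]
  have hgq : ∀ z, shifted φ' (1 + ‖Q₀‖) ‖w z - Q₀‖ ≤
      2 ^ (3*q) * φ (1 + ‖Q₀‖) + 2 ^ (3*q) * (2 ^ (2*q) * (φ ‖w z‖ + φ ‖Q₀‖)) := by
    intro z
    have h1 := h.shifted_dominated hq1 hbQ (norm_nonneg (w z - Q₀))
    have h2 : φ ‖w z - Q₀‖ ≤ 2 ^ (2*q) * (φ ‖w z‖ + φ ‖Q₀‖) := by
      have h3 : φ ‖w z - Q₀‖ ≤ φ (‖w z‖ + ‖Q₀‖) :=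
        h.phi_mono (mem_Ici.mpr (norm_nonneg _))
          (mem_Ici.mpr (by positivity)) (norm_sub_le _ _)
      exact h3.trans (h.phi_add_bound hq1 (norm_nonneg _) (norm_nonneg _))
    have hA : (0:ℝ) ≤ 2 ^ (3*q) := Real.rpow_nonneg (by norm_num) _
    nlinarith [mul_le_mul_of_nonneg_left h2 hA]
  have hgint : Integrable (fun z => shifted φ' (1 + ‖Q₀‖) ‖w z - Q₀‖)
      (volume.restrict U) := by
    have hmaj : Integrable (fun z => 2 ^ (3*q) * φ (1 + ‖Q₀‖)
        + 2 ^ (3*q) * (2 ^ (2*q) * (φ ‖w z‖ + φ ‖Q₀‖))) (volume.restrict U) :=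
      (integrable_const _).add
        ((Integrable.const_mul (Integrable.const_mul
          (Integrable.add hint (integrable_const (φ ‖Q₀‖))) (2 ^ (2*q))) (2 ^ (3*q))))
    refine Integrable.mono' hmaj (hmeascomp _ hbQ Q₀)
      (Filter.Eventually.of_forall (fun z => ?_))
    rw [Real.norm_eq_abs, abs_of_nonneg (h.shifted_nonneg hbQ (norm_nonneg _))]
    exact hgq z
  have hfint : Integrable (fun z => shifted φ' (1 + ‖W‖) ‖w z - W‖) (volume.restrict U) := by
    refine Integrable.mono'
      (Integrable.const_mul (hgint.add
        (integrable_const (shifted φ' (1 + ‖Q₀‖) ‖W - Q₀‖))) (2 ^ (3*q+3)))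
      (hmeascomp _ haW W) (Filter.Eventually.of_forall (fun z => ?_))
    rw [Real.norm_eq_abs, abs_of_nonneg (h.shifted_nonneg haW (norm_nonneg _))]
    exact hpt z
  have hnormint : Integrable (fun z => ‖w z - Q₀‖) (volume.restrict U) :=
    (hwint.sub (integrable_const Q₀)).norm
  have havg : shifted φ' (1 + ‖Q₀‖) ‖W - Q₀‖ ≤
      ⨍ z in U, shifted φ' (1 + ‖Q₀‖) ‖w z - Q₀‖ := by
    have hd_le : ‖W - Q₀‖ ≤ ⨍ z in U, ‖w z - Q₀‖ := by
      have e1 : W - Q₀ = (volume U).toReal⁻¹ • ∫ z in U, (w z - Q₀) := by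
        rw [hWdef, setAverage_eq, integral_sub hwint (integrable_const Q₀),
          setIntegral_const, measureReal_def, smul_sub, smul_smul,
          inv_mul_cancel₀ hcU0.ne', one_smul]
      rw [e1, setAverage_eq, norm_smul, Real.norm_eq_abs,
        abs_of_nonneg (inv_nonneg.mpr hcU0.le), smul_eq_mul]
      exact mul_le_mul_of_nonneg_left (norm_integral_le_integral_norm _)
        (inv_nonneg.mpr hcU0.le)
    have hj := (h.shifted_convexOn hbQ).map_average_le (h.shifted_contOn hbQ) isClosed_Ici
      (Filter.Eventually.of_forall (fun z => mem_Ici.mpr (norm_nonneg (w z - Q₀))))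
      hnormint (by exact hgint)
    exact le_trans (h.shifted_mono hbQ (norm_nonneg _) hd_le) hj
  have hIcomp : (∫ z in U, shifted φ' (1 + ‖W‖) ‖w z - W‖) ≤
      2 ^ (3*q+3) * ((∫ z in U, shifted φ' (1 + ‖Q₀‖) ‖w z - Q₀‖)
        + (volume U).toReal * shifted φ' (1 + ‖Q₀‖) ‖W - Q₀‖) := by
    have h1 := integral_mono hfint
      (Integrable.const_mul (hgint.add
        (integrable_const (shifted φ' (1 + ‖Q₀‖) ‖W - Q₀‖))) (2 ^ (3*q+3))) hpt
    rw [integral_const_mul] at h1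
    simp only [Pi.add_apply] at h1
    rw [integral_add hgint (integrable_const (shifted φ' (1 + ‖Q₀‖) ‖W - Q₀‖)), integral_const,
      measureReal_restrict_apply_univ, smul_eq_mul] at h1
    exact h1
  have hdc : (volume U).toReal * shifted φ' (1 + ‖Q₀‖) ‖W - Q₀‖ ≤
      ∫ z in U, shifted φ' (1 + ‖Q₀‖) ‖w z - Q₀‖ := by
    have h2 := mul_le_mul_of_nonneg_left havg hcU0.le
    rw [setAverage_eq, measureReal_def, smul_eq_mul, ← mul_assoc, mul_inv_cancel₀ hcU0.ne', one_mul] at h2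
    exact h2
  have hfin : (∫ z in U, shifted φ' (1 + ‖W‖) ‖w z - W‖) ≤
      2 * 2 ^ (3*q+3) * ∫ z in U, shifted φ' (1 + ‖Q₀‖) ‖w z - Q₀‖ := by
    have h4 := mul_le_mul_of_nonneg_left hdc h2pos.le
    linarith [hIcomp, h4]
  rw [setAverage_eq, setAverage_eq, smul_eq_mul, smul_eq_mul]
  calc (volume U).toReal⁻¹ * (∫ z in U, shifted φ' (1 + ‖W‖) ‖w z - W‖)
      ≤ (volume U).toReal⁻¹ *
          (2 * 2 ^ (3*q+3) * ∫ z in U, shifted φ' (1 + ‖Q₀‖) ‖w z - Q₀‖) :=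
        mul_le_mul_of_nonneg_left hfin (inv_nonneg.mpr hcU0.le)
    _ = 2 * 2 ^ (3*q+3) *
          ((volume U).toReal⁻¹ * ∫ z in U, shifted φ' (1 + ‖Q₀‖) ‖w z - Q₀‖) := by ring
end

section
/- Let φ : [0,∞) → [0,∞) be an N-function of class C¹([0,∞)) ∩ C²((0,∞)) with φ(0) = 0, φ'(0) = 0, φ' increasing and positive on (0,∞), satisfying p ≤ s·φ''(s)/φ'(s) + 1 ≤ q for all s > 0, where 1 < p ≤ q, and assume φ(s) → ∞ as s → ∞ so that φ has an inverse φ^{-1} on [0,∞). Then there exists c = c(p,q) > 0 such that for every measurable set U ⊂ ℝ^m with 0 < |U| < ∞ and every measurable f : U → [0,∞) with ∫_U φ(f) dz < ∞: ⨍_U φ'(f) dz ≤ c · φ'( φ^{-1}( ⨍_U φ(f) dz ) ). -/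
open MeasureTheory Real Set Filter
open scoped InnerProductSpace

section Aux

variable {φ φ' φ'' : ℝ → ℝ} {p q : ℝ}

lemma IsNFun.hasDerivAt (h : IsNFun φ φ' φ'' p q) {s : ℝ} (hs : 0 < s) :
    HasDerivAt φ (φ' s) s :=
  (h.hasDeriv s hs.le).hasDerivAt (Ici_mem_nhds hs)

lemma IsNFun.hasDerivAt2 (h : IsNFun φ φ' φ'' p q) {s : ℝ} (hs : 0 < s) :
    HasDerivAt φ' (φ'' s) s :=
  (h.hasDeriv2 s hs).hasDerivAt (Ioi_mem_nhds hs)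

lemma IsNFun.cont (h : IsNFun φ φ' φ'' p q) : ContinuousOn φ (Set.Ici 0) :=
  fun s hs => (h.hasDeriv s hs).continuousWithinAt

lemma IsNFun.deriv_nonneg_s18 (h : IsNFun φ φ' φ'' p q) {s : ℝ} (hs : 0 ≤ s) : 0 ≤ φ' s := by
  have := h.deriv_mono self_mem_Ici hs hs
  rwa [h.deriv_zero] at this

/-- `φ(s) > 0` for `s > 0`. -/
lemma IsNFun.pos (h : IsNFun φ φ' φ'' p q) {s : ℝ} (hs : 0 < s) : 0 < φ s := by
  have hsm : StrictMonoOn φ (Set.Ici 0) := by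
    apply strictMonoOn_of_deriv_pos (convex_Ici 0) h.cont
    intro x hx
    rw [interior_Ici] at hx
    rw [(h.hasDerivAt hx).deriv]
    exact h.deriv_pos x hx
  have := hsm self_mem_Ici hs.le hs
  rwa [h.map_zero] at this

/-- `s·φ'(s) ≤ q·φ(s)` for `s ≥ 0`. -/
lemma IsNFun.upper (h : IsNFun φ φ' φ'' p q) {s : ℝ} (hs : 0 ≤ s) :
    s * φ' s ≤ q * φ s := by
  set g : ℝ → ℝ := fun s => q * φ s - s * φ' s with hg
  have hd : ∀ x : ℝ, 0 < x → HasDerivAt g (q * φ' x - (1 * φ' x + x * φ'' x)) x := by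
    intro x hx
    exact ((h.hasDerivAt hx).const_mul q).sub
      ((hasDerivAt_id x).mul (h.hasDerivAt2 hx))
  have hmono : MonotoneOn g (Set.Ici 0) := by
    apply monotoneOn_of_deriv_nonneg (convex_Ici 0)
    · intro x hx
      rcases eq_or_lt_of_le (Set.mem_Ici.mp hx) with rfl | hx
      · exact ContinuousWithinAt.sub
          (((h.cont 0 self_mem_Ici).const_smul q).mono (by simp))
          ((continuousWithinAt_id.mul (h.derivCont 0 self_mem_Ici)))
      · exact ((hd x hx).continuousAt).continuousWithinAt
    · intro x hx
      rw [interior_Ici] at hx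
      exact ((hd x hx).differentiableAt).differentiableWithinAt
    · intro x hx
      rw [interior_Ici] at hx
      rw [(hd x hx).deriv]
      have hφ' := h.deriv_pos x hx
      have := h.idx_high x hx
      have hle : x * φ'' x ≤ (q - 1) * φ' x := by
        rw [div_add' _ _ _ hφ'.ne', div_le_iff₀ hφ'] at this
        nlinarith
      nlinarith
  rcases eq_or_lt_of_le hs with rfl | hs
  · simp [h.map_zero, h.deriv_zero]
  · have := hmono self_mem_Ici hs.le hs.le
    simp only [hg, h.map_zero, h.deriv_zero] at this
    linarith

/-- `φ(s) ≤ s·φ'(s)` for `s ≥ 0`. -/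
lemma IsNFun.lower (h : IsNFun φ φ' φ'' p q) (hp : 1 < p) {s : ℝ} (hs : 0 ≤ s) :
    φ s ≤ s * φ' s := by
  set g : ℝ → ℝ := fun s => s * φ' s - φ s with hg
  have hd : ∀ x : ℝ, 0 < x → HasDerivAt g (1 * φ' x + x * φ'' x - φ' x) x := by
    intro x hx
    exact ((hasDerivAt_id x).mul (h.hasDerivAt2 hx)).sub (h.hasDerivAt hx)
  have hmono : MonotoneOn g (Set.Ici 0) := by
    apply monotoneOn_of_deriv_nonneg (convex_Ici 0)
    · intro x hx
      rcases eq_or_lt_of_le (Set.mem_Ici.mp hx) with rfl | hx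
      · exact ContinuousWithinAt.sub
          (continuousWithinAt_id.mul (h.derivCont 0 self_mem_Ici))
          (h.cont 0 self_mem_Ici)
      · exact ((hd x hx).continuousAt).continuousWithinAt
    · intro x hx
      rw [interior_Ici] at hx
      exact ((hd x hx).differentiableAt).differentiableWithinAt
    · intro x hx
      rw [interior_Ici] at hx
      rw [(hd x hx).deriv]
      have hφ' := h.deriv_pos x hx
      have := h.idx_low x hx
      have hle : (p - 1) * φ' x ≤ x * φ'' x := by
        rw [div_add' _ _ _ hφ'.ne', le_div_iff₀ hφ'] at this
        nlinarith
      nlinarith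
  rcases eq_or_lt_of_le hs with rfl | hs
  · simp [h.map_zero, h.deriv_zero]
  · have := hmono self_mem_Ici hs.le hs.le
    simp only [hg, h.map_zero, h.deriv_zero] at this
    linarith

end Aux

/-- **Jensen-type estimate for `φ'`.** For an N-function `φ` with index condition
(`1 < p ≤ q`) and `φ(s) → ∞`, with inverse `φ⁻¹`, there is `c = c(p,q)` such that
`⨍_U φ'(f) ≤ c·φ'(φ⁻¹(⨍_U φ(f)))` for all `U` of positive finite measure and all
measurable `f ≥ 0` with `∫_U φ(f) < ∞`. -/
theorem mean_deriv_jensen (m : ℕ) (p q : ℝ) (φ φ' φ'' φinv : ℝ → ℝ)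
    (hp : 1 < p) (hpq : p ≤ q) (h : IsNFun φ φ' φ'' p q)
    (htop : Tendsto φ atTop atTop)
    (hinv_left : ∀ s : ℝ, 0 ≤ s → φinv (φ s) = s)
    (hinv_right : ∀ t : ℝ, 0 ≤ t → φ (φinv t) = t ∧ 0 ≤ φinv t) :
    ∃ c : ℝ, 0 < c ∧ ∀ U : Set (EuclideanSpace ℝ (Fin m)), MeasurableSet U →
      0 < volume U → volume U < ⊤ →
      ∀ f : EuclideanSpace ℝ (Fin m) → ℝ, (∀ z, 0 ≤ f z) →
        AEStronglyMeasurable f (volume.restrict U) →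
        IntegrableOn (fun z => φ (f z)) U →
        ⨍ z in U, φ' (f z) ≤ c * φ' (φinv (⨍ z in U, φ (f z))) := by
  have hq1 : 1 < q := lt_of_lt_of_le hp hpq
  refine ⟨1 + q, by linarith, ?_⟩
  intro U hU hU0 hUtop f hf hfm hint
  set M := ⨍ z in U, φ (f z) with hMdef
  have hUr : (0:ℝ) < (volume U).toReal := ENNReal.toReal_pos hU0.ne' hUtop.ne
  have hMeq : M = (volume U).toReal⁻¹ * ∫ z in U, φ (f z) := by
    rw [hMdef, setAverage_eq, smul_eq_mul, measureReal_def]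
  have hIntNonneg : 0 ≤ ∫ z in U, φ (f z) :=
    setIntegral_nonneg hU fun z _ => h.nonneg _ (hf z)
  have hMnonneg : 0 ≤ M := by
    rw [hMeq]; positivity
  -- measurability of φ' ∘ f
  have hcontmax : Continuous fun x : ℝ => φ' (max x 0) := by
    apply h.derivCont.comp_continuous (continuous_id.max continuous_const)
    intro x; exact le_max_right x 0
  have hφ'm : AEStronglyMeasurable (fun z => φ' (f z)) (volume.restrict U) := by
    have := hcontmax.comp_aestronglyMeasurable hfm
    refine this.congr (Filter.Eventually.of_forall fun z => ?_)
    simp [max_eq_left (hf z)]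
  rcases eq_or_lt_of_le hMnonneg with hM0 | hMpos
  · -- M = 0 : f = 0 a.e.
    have hI0 : ∫ z in U, φ (f z) = 0 := by
      by_contra hne
      have : 0 < ∫ z in U, φ (f z) := lt_of_le_of_ne hIntNonneg (Ne.symm hne)
      have : 0 < M := by rw [hMeq]; positivity
      rw [← hM0] at this; exact lt_irrefl _ this
    have hae : (fun z => φ (f z)) =ᶠ[ae (volume.restrict U)] 0 :=
      (integral_eq_zero_iff_of_nonneg (fun z => h.nonneg _ (hf z)) hint).mp hI0
    have haef : (fun z => φ' (f z)) =ᶠ[ae (volume.restrict U)] 0 := by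
      filter_upwards [hae] with z hz
      simp only [Pi.zero_apply] at hz ⊢
      have hz0 : f z = 0 := by
        by_contra hne
        have : 0 < f z := lt_of_le_of_ne (hf z) (Ne.symm hne)
        exact absurd hz (h.pos this).ne'
      rw [hz0, h.deriv_zero]
    have hL : ⨍ z in U, φ' (f z) = 0 := by
      rw [average_congr haef]; simp
    have hinv0 : φinv M = 0 := by
      have := hinv_left 0 le_rfl
      rw [h.map_zero] at this
      rw [← hM0, this]
    rw [hL, hinv0, h.deriv_zero, mul_zero]
  · -- M > 0
    set a := φinv M with hadef
    obtain ⟨haM, ha0⟩ := hinv_right M hMpos.le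
    have ha : 0 < a := by
      rcases eq_or_lt_of_le ha0 with heq | hlt
      · exfalso; rw [← heq, h.map_zero] at haM; exact hMpos.ne haM
      · exact hlt
    have hqpos : 0 < q := by linarith
    -- pointwise bound
    have hpt : ∀ z, φ' (f z) ≤ φ' a + q / a * φ (f z) := by
      intro z
      rcases le_total (f z) a with hle | hle
      · have h1 : φ' (f z) ≤ φ' a := h.deriv_mono (hf z) ha0 hle
        have h2 : 0 ≤ q / a * φ (f z) := by
          have := h.nonneg _ (hf z); positivity
        linarith
      · have h1 : f z * φ' (f z) ≤ q * φ (f z) := h.upper (hf z)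
        have h2 : a * φ' (f z) ≤ f z * φ' (f z) :=
          mul_le_mul_of_nonneg_right hle (h.deriv_nonneg_s18 (hf z))
        have h3 : φ' (f z) ≤ q / a * φ (f z) := by
          rw [div_mul_eq_mul_div, le_div_iff₀ ha]
          nlinarith
        have h4 : 0 ≤ φ' a := h.deriv_nonneg_s18 ha0
        linarith
    -- integrability
    have hgint : Integrable (fun z => φ' a + q / a * φ (f z)) (volume.restrict U) := by
      exact (integrableOn_const hUtop.ne).add (hint.const_mul _)
    have hφ'int : Integrable (fun z => φ' (f z)) (volume.restrict U) := by
      refine hgint.mono' hφ'm (Filter.Eventually.of_forall fun z => ?_)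
      rw [Real.norm_eq_abs, abs_of_nonneg (h.deriv_nonneg_s18 (hf z))]
      exact hpt z
    have hIle : ∫ z in U, φ' (f z) ≤ ∫ z in U, (φ' a + q / a * φ (f z)) :=
      integral_mono hφ'int hgint hpt
    have hIcalc : ∫ z in U, (φ' a + q / a * φ (f z))
        = φ' a * (volume U).toReal + q / a * ∫ z in U, φ (f z) := by
      rw [integral_add (integrableOn_const (C := φ' a) hUtop.ne) (hint.const_mul _),
        setIntegral_const, integral_const_mul, smul_eq_mul, measureReal_def]
      ring
    have havg : ⨍ z in U, φ' (f z) ≤ φ' a + q / a * M := by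
      rw [setAverage_eq, smul_eq_mul, hMeq]
      calc (volume U).toReal⁻¹ * ∫ z in U, φ' (f z)
          ≤ (volume U).toReal⁻¹ * (φ' a * (volume U).toReal + q / a * ∫ z in U, φ (f z)) := by
            apply mul_le_mul_of_nonneg_left _ (by positivity)
            rw [← hIcalc]; exact hIle
        _ = φ' a + q / a * ((volume U).toReal⁻¹ * ∫ z in U, φ (f z)) := by
            field_simp
    have hfinal : φ' a + q / a * M ≤ (1 + q) * φ' a := by
      have hlow : φ a ≤ a * φ' a := h.lower hp ha0
      have : q / a * M ≤ q * φ' a := by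
        rw [← haM, div_mul_eq_mul_div, div_le_iff₀ ha]
        nlinarith
      linarith
    calc ⨍ z in U, φ' (f z) ≤ φ' a + q / a * M := havg
      _ ≤ (1 + q) * φ' a := hfinal
end
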